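/- arXiv:2510.20418 — 4 statements merged into one kernel-verified Lean document; each statement's English description precedes it below -/
import Mathlib

section
/- If S is a local ring with maximal ideal q such that S/q has characteristic p, and G is a finite p-group, then the group ring SG is a local ring whose maximal ideal is m = I + q·1, where I is the augmentation ideal of SG; moreover SG/m ≅ S/q. -/
open MonoidAlgebra

section Aux

/-- `single z 1` for a central `z` commutes with everything in the monoid algebra. -/
lemma MonoidAlgebraLocal.single_central_commute {k : Type*} [CommRing k] {G : Type*} [Group G]
    {z : G} (hz : z ∈ Subgroup.center G) (r : MonoidAlgebra k G) :
    Commute (single z (1 : k)) r := by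
  induction r using MonoidAlgebra.induction_on with
  | of g =>
      show single z 1 * MonoidAlgebra.of k G g = MonoidAlgebra.of k G g * single z 1
      simp only [MonoidAlgebra.of_apply, MonoidAlgebra.single_mul_single, one_mul, mul_one]
      rw [Subgroup.mem_center_iff.mp hz g]
  | add f g hf hg => exact hf.add_right hg
  | smul r f hf => exact hf.smul_right r

/-- Every element of the augmentation ideal of `k[G]` is nilpotent, for `G` a finite
`p`-group and `k` of characteristic `p`. -/
lemma MonoidAlgebraLocal.augNil (p : ℕ) [Fact p.Prime] (k : Type) [CommRing k] [CharP k p] :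
    ∀ (n : ℕ) (G : Type) [Group G] [Finite G], Nat.card G = n → IsPGroup p G →
      ∀ x : MonoidAlgebra k G, (MonoidAlgebra.lift k k G) 1 x = 0 → IsNilpotent x := by
  intro n
  induction n using Nat.strong_induction_on with
  | _ n IH =>
  intro G _ _ hcard hG x hx
  haveI : CharP (MonoidAlgebra k G) p := by
    refine charP_of_injective_ringHom (f := algebraMap k (MonoidAlgebra k G)) ?_ p
    intro a b hab
    have := congrArg (fun y : MonoidAlgebra k G => y.coeff 1) hab
    simpa [MonoidAlgebra.coe_algebraMap] using this
  rcases subsingleton_or_nontrivial G with hGs | hGn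
  · refine ⟨1, ?_⟩
    rw [pow_one]
    have hx1 : x = single (1 : G) (x.coeff 1) := by
      ext a
      rw [Subsingleton.elim a (1 : G)]
      simp [MonoidAlgebra.single_apply]
    rw [hx1, MonoidAlgebra.lift_single] at hx
    simp only [MonoidHom.one_apply, smul_eq_mul, mul_one] at hx
    rw [hx1, hx]
    simp
  · haveI : Nontrivial (Subgroup.center G) := hG.center_nontrivial
    obtain ⟨z, hz1⟩ := exists_ne (1 : Subgroup.center G)
    have hzzc : (z : G) ∈ Subgroup.center G := z.2
    set zz : G := (z : G) with hzzdef
    have hzz1 : zz ≠ 1 := fun h => hz1 (Subtype.ext h)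
    set H : Subgroup G := Subgroup.zpowers zz with hHdef
    haveI : H.Normal := by
      constructor
      intro h hh g
      have hcen : h ∈ Subgroup.center G := by
        obtain ⟨j, rfl⟩ := Subgroup.mem_zpowers_iff.mp hh
        exact Subgroup.zpow_mem _ hzzc j
      rw [Subgroup.mem_center_iff.mp hcen g, mul_inv_cancel_right]
      exact hh
    have hlt : Nat.card (G ⧸ H) < n := by
      have h1 : Nat.card G = Nat.card (G ⧸ H) * Nat.card H :=
        Subgroup.card_eq_card_quotient_mul_card_subgroup H
      have h2 : 1 < Nat.card H := by
        refine Finite.one_lt_card_iff_nontrivial.mpr ?_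
        exact ⟨⟨⟨zz, Subgroup.mem_zpowers zz⟩, 1, fun h => hzz1 (by simpa [Subtype.ext_iff] using h)⟩⟩
      have h3 : 0 < Nat.card (G ⧸ H) := Nat.card_pos
      calc Nat.card (G ⧸ H) < Nat.card (G ⧸ H) * Nat.card H :=
            (lt_mul_iff_one_lt_right h3).mpr h2
        _ = n := by rw [← h1, hcard]
    set φ : MonoidAlgebra k G →+* MonoidAlgebra k (G ⧸ H) :=
      MonoidAlgebra.mapDomainRingHom k (QuotientGroup.mk' H) with hφdef
    have haug : (MonoidAlgebra.lift k k (G ⧸ H)) 1 (φ x) = 0 := by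
      have hcomp :
          (((MonoidAlgebra.lift k k (G ⧸ H)) 1).toRingHom).comp φ
            = ((MonoidAlgebra.lift k k G) 1).toRingHom := by
        apply MonoidAlgebra.ringHom_ext <;> intro a <;>
          simp [hφdef, MonoidAlgebra.lift_single, Finsupp.mapDomain_single]
      have h := RingHom.congr_fun hcomp x
      simp only [RingHom.coe_comp, Function.comp_apply, AlgHom.toRingHom_eq_coe,
        RingHom.coe_coe] at h
      rw [h, hx]
    obtain ⟨M, hM⟩ := IH (Nat.card (G ⧸ H)) hlt (G ⧸ H) rfl (hG.to_quotient H) (φ x) haug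
    have hy : φ (x ^ (M + 1)) = 0 := by
      rw [map_pow, pow_succ, hM, zero_mul]
    obtain ⟨kk, hkk⟩ := hG zz
    set c0 : MonoidAlgebra k G := single zz 1 - 1 with hc0
    have hfac : ∃ w : MonoidAlgebra k G, x ^ (M + 1) = c0 * w := by
      set y : MonoidAlgebra k G := x ^ (M + 1) with hy'
      have h0 : Finsupp.mapDomain (⇑(QuotientGroup.mk' H)) y.coeff = 0 := by
        have := congrArg MonoidAlgebra.coeff hy
        simpa [hφdef, MonoidAlgebra.mapDomain] using this
      set σ : (G ⧸ H) → G := Function.surjInv (QuotientGroup.mk'_surjective H) with hσ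
      have hσ' : ∀ q, QuotientGroup.mk' H (σ q) = q := fun q => Function.surjInv_eq _ q
      have hT : Finsupp.mapDomain (fun g => σ (QuotientGroup.mk' H g)) y.coeff = 0 := by
        rw [show (fun g => σ (QuotientGroup.mk' H g)) = σ ∘ ⇑(QuotientGroup.mk' H) from rfl,
          Finsupp.mapDomain_comp, h0, Finsupp.mapDomain_zero]
      have key : ∀ g : G, ∃ w : MonoidAlgebra k G,
          single g (1 : k) - single (σ (QuotientGroup.mk' H g)) 1 = c0 * w := by
        intro g
        set g' : G := σ (QuotientGroup.mk' H g) with hg'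
        have hmkeq : (QuotientGroup.mk' H) g' = (QuotientGroup.mk' H) g := hσ' _
        have hmem : g'⁻¹ * g ∈ H := by
          rwa [QuotientGroup.mk'_apply, QuotientGroup.mk'_apply, QuotientGroup.eq] at hmkeq
        have hmem2 : g * g'⁻¹ ∈ H := by
          have hconj := ‹H.Normal›.conj_mem _ hmem g'
          simpa [mul_assoc, mul_inv_cancel_left] using hconj
        have hfin : IsOfFinOrder zz :=
          isOfFinOrder_iff_pow_eq_one.mpr ⟨p ^ kk, pow_pos (Fact.out : p.Prime).pos kk, hkk⟩
        obtain ⟨nn, hnn⟩ := (Submonoid.mem_powers_iff _ _).mp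
          (hfin.mem_powers_iff_mem_zpowers.mpr hmem2)
        refine ⟨(∑ i ∈ Finset.range nn, (single zz (1 : k)) ^ i) * single g' 1, ?_⟩
        have : c0 * ((∑ i ∈ Finset.range nn, (single zz (1 : k)) ^ i) * single g' 1)
            = single g 1 - single g' 1 := by
          rw [hc0, ← mul_assoc, mul_geom_sum, MonoidAlgebra.single_pow, one_pow, hnn, sub_mul,
            one_mul, MonoidAlgebra.single_mul_single, one_mul, inv_mul_cancel_right]
        exact this.symm
      choose w hw using key
      refine ⟨y.coeff.sum fun g c => w g * single (1 : G) c, ?_⟩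
      have hy2 : y = y.coeff.sum fun g c => single g c - single (σ (QuotientGroup.mk' H g)) c := by
        rw [Finsupp.sum_sub, MonoidAlgebra.sum_coeff_single]
        have hmd : (y.coeff.sum fun g c => single (σ (QuotientGroup.mk' H g)) c)
            = MonoidAlgebra.ofCoeff (Finsupp.mapDomain (fun g => σ (QuotientGroup.mk' H g)) y.coeff) := by
          simp only [Finsupp.mapDomain, MonoidAlgebra.ofCoeff_finsuppSum, MonoidAlgebra.ofCoeff_single]
        rw [hmd, hT, MonoidAlgebra.ofCoeff_zero, sub_zero]
      conv_lhs => rw [hy2]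
      rw [Finsupp.mul_sum]
      refine Finsupp.sum_congr fun g _ => ?_
      rw [← mul_assoc, ← hw g]
      simp [sub_mul, MonoidAlgebra.single_mul_single]
    obtain ⟨w, hw⟩ := hfac
    refine ⟨(M + 1) * p ^ kk, ?_⟩
    rw [pow_mul, hw]
    have hcomm : Commute c0 w :=
      (MonoidAlgebraLocal.single_central_commute hzzc w).sub_left (Commute.one_left w)
    rw [hcomm.mul_pow]
    have hc0nil : c0 ^ p ^ kk = 0 := by
      rw [hc0, sub_pow_char_pow_of_commute p kk (Commute.one_right _),
        MonoidAlgebra.single_pow, one_pow, hkk, one_pow, MonoidAlgebra.one_def, sub_self]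
    rw [hc0nil, zero_mul]

/-- If all coordinates of `z` lie in the maximal ideal of the local base ring, then
`1 - z` has a right inverse in the monoid algebra. -/
lemma MonoidAlgebraLocal.rightInv_one_sub {S : Type} [CommRing S] [IsLocalRing S]
    {G : Type} [Group G] [Finite G] (z : MonoidAlgebra S G)
    (hz : ∀ g : G, z.coeff g ∈ IsLocalRing.maximalIdeal S) :
    ∃ c, (1 - z) * c = 1 := by
  classical
  set q : Ideal S := IsLocalRing.maximalIdeal S with hq
  haveI hqmax : q.IsMaximal := IsLocalRing.maximalIdeal.isMaximal S
  letI : Field (S ⧸ q) := Ideal.Quotient.field q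
  haveI : Module.Finite S (MonoidAlgebra S G) :=
    inferInstance
  set W : Submodule S (MonoidAlgebra S G) :=
    LinearMap.range (LinearMap.mulLeft S ((1 : MonoidAlgebra S G) - z)) with hW
  have hcoord : ∀ w : MonoidAlgebra S G, (∀ g, w.coeff g ∈ q) →
      w ∈ q • (⊤ : Submodule S (MonoidAlgebra S G)) := by
    intro w hwq
    have hrepr : w = w.coeff.sum fun g c => c • single g (1 : S) := by
      have hfun : (fun (g : G) (c : S) => c • single g (1 : S))
          = fun (g : G) (c : S) => single g c := by
        funext g c
        simp [MonoidAlgebra.smul_single']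
      rw [hfun, MonoidAlgebra.sum_coeff_single]
    rw [hrepr]
    refine Submodule.finsuppSum_mem S (q • (⊤ : Submodule S (MonoidAlgebra S G)))
      w.coeff _ ?_
    intro g _
    exact Submodule.smul_mem_smul (hwq g) Submodule.mem_top
  have hsub : ∀ a : MonoidAlgebra S G,
      z * a ∈ q • (⊤ : Submodule S (MonoidAlgebra S G)) := by
    intro a
    refine hcoord _ fun g => ?_
    rw [MonoidAlgebra.coeff_mul]
    refine Submodule.finsuppSum_mem S q z.coeff _ ?_
    intro a1 _
    refine Submodule.finsuppSum_mem S q a.coeff _ ?_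
    intro a2 _
    split
    · exact Ideal.mul_mem_right _ _ (hz a1)
    · exact q.zero_mem
  have htop : (⊤ : Submodule S (MonoidAlgebra S G ⧸ W)) ≤
      q • (⊤ : Submodule S (MonoidAlgebra S G ⧸ W)) := by
    rintro xq -
    obtain ⟨a, rfl⟩ := Submodule.Quotient.mk_surjective W xq
    have h1 : (Submodule.Quotient.mk a : MonoidAlgebra S G ⧸ W)
        = Submodule.Quotient.mk (z * a) := by
      rw [Submodule.Quotient.eq]
      exact ⟨a, by simp [LinearMap.mulLeft_apply, sub_mul, one_mul]⟩
    rw [h1]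
    have h3 : Submodule.Quotient.mk (p := W) (z * a) ∈
        Submodule.map W.mkQ (q • (⊤ : Submodule S (MonoidAlgebra S G))) := by
      exact ⟨z * a, hsub a, rfl⟩
    rw [Submodule.map_smul''] at h3
    exact Submodule.smul_mono le_rfl le_top h3
  have hbot : (⊤ : Submodule S (MonoidAlgebra S G ⧸ W)) = ⊥ :=
    Submodule.eq_bot_of_le_smul_of_le_jacobson_bot q ⊤ Module.Finite.fg_top htop
      (by rw [IsLocalRing.jacobson_eq_maximalIdeal ⊥ bot_ne_top])
  haveI : Subsingleton (MonoidAlgebra S G ⧸ W) := by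
    refine ⟨fun a b => ?_⟩
    have ha : a ∈ (⊥ : Submodule S (MonoidAlgebra S G ⧸ W)) := hbot ▸ Submodule.mem_top
    have hb : b ∈ (⊥ : Submodule S (MonoidAlgebra S G ⧸ W)) := hbot ▸ Submodule.mem_top
    rw [Submodule.mem_bot] at ha hb
    rw [ha, hb]
  have hWtop : W = ⊤ := Submodule.Quotient.subsingleton_iff.mp inferInstance
  have h1 : (1 : MonoidAlgebra S G) ∈ W := hWtop ▸ Submodule.mem_top
  obtain ⟨c, hc⟩ := h1
  exact ⟨c, by simpa [LinearMap.mulLeft_apply] using hc⟩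

end Aux

/-- **The group ring of a finite `p`-group over a local ring is local.**
If `S` is a (commutative) local ring with maximal ideal `q` such that `S/q` has
characteristic `p`, and `G` is a finite `p`-group, then the group ring `SG` is
a local ring whose maximal ideal is `m = I ⊔ q·SG`, where `I` is the
augmentation ideal of `SG`; moreover `SG/m ≅ S/q`.  (Locality with specified
maximal ideal is expressed by: an ideal of `SG` is maximal iff it equals `m`;
the isomorphism `SG/m ≅ S/q` is expressed by a surjective ring homomorphism
`SG → S/q` with kernel `m`.) -/
theorem monoidAlgebra_isLocalRing_of_isPGroup
    (p : ℕ) [Fact p.Prime]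
    (S : Type) [CommRing S] [IsLocalRing S]
    [CharP (S ⧸ IsLocalRing.maximalIdeal S) p]
    (G : Type) [Group G] [Finite G] (hG : IsPGroup p G)
    (I : Ideal (MonoidAlgebra S G))
    (hI : I = RingHom.ker
      (((MonoidAlgebra.lift S S G) 1 : MonoidAlgebra S G →ₐ[S] S) : MonoidAlgebra S G →+* S))
    (m : Ideal (MonoidAlgebra S G))
    (hm : m = I ⊔ Ideal.map (algebraMap S (MonoidAlgebra S G)) (IsLocalRing.maximalIdeal S)) :
    (∀ J : Ideal (MonoidAlgebra S G), J.IsMaximal ↔ J = m) ∧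
      ∃ f : MonoidAlgebra S G →+* (S ⧸ IsLocalRing.maximalIdeal S),
        Function.Surjective f ∧ RingHom.ker f = m := by
  classical
  set q : Ideal S := IsLocalRing.maximalIdeal S with hq
  haveI hqmax : q.IsMaximal := IsLocalRing.maximalIdeal.isMaximal S
  letI : Field (S ⧸ q) := Ideal.Quotient.field q
  set augS : MonoidAlgebra S G →+* S :=
    (((MonoidAlgebra.lift S S G) 1 : MonoidAlgebra S G →ₐ[S] S) : MonoidAlgebra S G →+* S)
    with haugS
  set f : MonoidAlgebra S G →+* (S ⧸ q) := (Ideal.Quotient.mk q).comp augS with hf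
  have haugsurj : Function.Surjective augS := by
    intro s
    refine ⟨single 1 s, ?_⟩
    simp [haugS, MonoidAlgebra.lift_single]
  have hfsurj : Function.Surjective f :=
    (Ideal.Quotient.mk_surjective).comp haugsurj
  -- the reduction map π : S[G] → (S/q)[G]
  set π : MonoidAlgebra S G →+* MonoidAlgebra (S ⧸ q) G :=
    MonoidAlgebra.liftNCRingHom (singleOneRingHom.comp (Ideal.Quotient.mk q))
      (MonoidAlgebra.of (S ⧸ q) G)
      (fun a b => by
        simp only [RingHom.coe_comp, Function.comp_apply, singleOneRingHom_apply,
          MonoidAlgebra.of_apply]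
        unfold Commute SemiconjBy
        simp [MonoidAlgebra.single_mul_single]) with hπ
  have hπsingle : ∀ (g : G) (c : S), π (single g c) = single g (Ideal.Quotient.mk q c) := by
    intro g c
    simp only [hπ, MonoidAlgebra.liftNCRingHom, RingHom.coe_mk, MonoidHom.coe_mk, OneHom.coe_mk,
      AddMonoidHom.toFun_eq_coe, RingHom.toAddMonoidHom_eq_coe, AddMonoidHom.coe_coe,
      MonoidAlgebra.liftNC_single, RingHom.coe_comp, Function.comp_apply,
      singleOneRingHom_apply, MonoidAlgebra.of_apply, Finsupp.singleAddHom_apply]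
    simp [MonoidAlgebra.single_mul_single]
  have hπcoord : ∀ (x : MonoidAlgebra S G) (g : G),
      (π x).coeff g = Ideal.Quotient.mk q (x.coeff g) := by
    intro x
    induction x using MonoidAlgebra.induction_linear with
    | zero => simp
    | add a b ha hb => intro g; rw [map_add, MonoidAlgebra.coeff_add, Finsupp.add_apply, ha, hb,
        MonoidAlgebra.coeff_add, Finsupp.add_apply, map_add]
    | single a b =>
        intro g
        rw [hπsingle, MonoidAlgebra.coeff_single, MonoidAlgebra.coeff_single, Finsupp.single_apply, Finsupp.single_apply, apply_ite (Ideal.Quotient.mk q),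
          map_zero]
  -- kernel of f is m
  have hker : RingHom.ker f = m := by
    ext x
    constructor
    · intro hx
      have hx' : augS x ∈ q := by
        rw [RingHom.mem_ker, hf, RingHom.comp_apply, Ideal.Quotient.eq_zero_iff_mem] at hx
        exact hx
      have hsplit : x = (x - algebraMap S (MonoidAlgebra S G) (augS x))
          + algebraMap S (MonoidAlgebra S G) (augS x) := by abel
      rw [hm, hsplit]
      refine Submodule.add_mem_sup ?_ (Ideal.mem_map_of_mem _ hx')
      rw [hI, RingHom.mem_ker]
      have hcommutes : augS (algebraMap S (MonoidAlgebra S G) (augS x)) = augS x := by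
        simpa [haugS] using
          ((MonoidAlgebra.lift S S G) 1 : MonoidAlgebra S G →ₐ[S] S).commutes (augS x)
      rw [map_sub, hcommutes, sub_self]
    · intro hx
      have hle : m ≤ RingHom.ker f := by
        rw [hm]
        refine sup_le ?_ ?_
        · intro a ha
          rw [hI, RingHom.mem_ker] at ha
          rw [RingHom.mem_ker, hf, RingHom.comp_apply, ha, map_zero]
        · rw [Ideal.map_le_iff_le_comap]
          intro s hs
          rw [Ideal.mem_comap, RingHom.mem_ker, hf, RingHom.comp_apply]
          have : augS (algebraMap S (MonoidAlgebra S G) s) = s := by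
            simpa [haugS] using
              ((MonoidAlgebra.lift S S G) 1 : MonoidAlgebra S G →ₐ[S] S).commutes s
          rw [this, Ideal.Quotient.eq_zero_iff_mem]
          exact hs
      exact hle hx
  -- commuting square : aug on (S/q)[G] composed with π equals f
  have hsquare : ∀ x : MonoidAlgebra S G,
      (MonoidAlgebra.lift (S ⧸ q) (S ⧸ q) G) 1 (π x) = f x := by
    have hcomp : (((MonoidAlgebra.lift (S ⧸ q) (S ⧸ q) G) 1).toRingHom).comp π = f := by
      apply MonoidAlgebra.ringHom_ext
      · intro b
        rw [RingHom.comp_apply, hπsingle]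
        simp [hf, haugS, MonoidAlgebra.lift_single]
      · intro a
        rw [RingHom.comp_apply, hπsingle]
        simp [hf, haugS, MonoidAlgebra.lift_single]
    intro x
    have h := RingHom.congr_fun hcomp x
    simpa using h
  -- every element of ker f has 1 - c invertible (one-sided, then two-sided)
  have hright : ∀ c ∈ RingHom.ker f, ∃ d, (1 - c) * d = 1 := by
    intro c hc
    have hπc : (MonoidAlgebra.lift (S ⧸ q) (S ⧸ q) G) 1 (π c) = 0 := by
      rw [hsquare c]
      exact hc
    obtain ⟨N, hN⟩ := MonoidAlgebraLocal.augNil p (S ⧸ q) (Nat.card G) G rfl hG (π c) hπc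
    have hcN : ∀ g : G, (c ^ N).coeff g ∈ q := by
      intro g
      have : (π (c ^ N)).coeff g = 0 := by rw [map_pow, hN]; simp
      rw [hπcoord] at this
      rwa [← Ideal.Quotient.eq_zero_iff_mem]
    obtain ⟨e, he⟩ := MonoidAlgebraLocal.rightInv_one_sub (c ^ N) hcN
    have hgeom : (1 - c) * (∑ i ∈ Finset.range N, c ^ i) = 1 - c ^ N := by
      have hcomm : Commute (c - 1) (∑ i ∈ Finset.range N, c ^ i) :=
        Commute.sum_right _ _ _ fun i _ =>
          (((Commute.refl c).pow_right i).sub_left (Commute.one_left _))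
      calc (1 - c) * (∑ i ∈ Finset.range N, c ^ i)
          = -((c - 1) * (∑ i ∈ Finset.range N, c ^ i)) := by
            rw [← neg_sub c 1, neg_mul]
        _ = -((∑ i ∈ Finset.range N, c ^ i) * (c - 1)) := by rw [hcomm.eq]
        _ = -(c ^ N - 1) := by rw [geom_sum_mul]
        _ = 1 - c ^ N := neg_sub _ _
    refine ⟨(∑ i ∈ Finset.range N, c ^ i) * e, ?_⟩
    rw [← mul_assoc, hgeom, he]
  have hunit : ∀ c ∈ RingHom.ker f, IsUnit (1 - c) := by
    intro c hc
    obtain ⟨d, hd⟩ := hright c hc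
    have hfd : f d = 1 := by
      have h1 : f ((1 - c) * d) = 1 := by rw [hd, map_one]
      have h2 : f (1 - c) = 1 := by
        have hc0 : f c = 0 := RingHom.mem_ker.mp hc
        rw [map_sub, map_one, hc0, sub_zero]
      rw [map_mul, h2, one_mul] at h1
      exact h1
    have hc' : (1 - d) ∈ RingHom.ker f := by
      rw [RingHom.mem_ker, map_sub, map_one, hfd, sub_self]
    obtain ⟨e, he⟩ := hright (1 - d) hc'
    rw [sub_sub_cancel] at he
    have hde : (1 : MonoidAlgebra S G) - c = e := by
      calc (1 : MonoidAlgebra S G) - c = (1 - c) * (d * e) := by rw [he, mul_one]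
        _ = ((1 - c) * d) * e := by rw [mul_assoc]
        _ = e := by rw [hd, one_mul]
    refine ⟨⟨1 - c, d, hd, ?_⟩, rfl⟩
    show d * (1 - c) = 1
    rw [hde]
    exact he
  -- m is maximal
  have hmmax : m.IsMaximal := by
    rw [← hker]
    rw [Ideal.isMaximal_iff]
    constructor
    · intro h1
      rw [RingHom.mem_ker, map_one] at h1
      exact one_ne_zero h1
    · intro J x hIJ hx hxJ
      rw [RingHom.mem_ker] at hx
      obtain ⟨y, hy⟩ := hfsurj (f x)⁻¹
      have hyx : f (y * x) = 1 := by
        rw [map_mul, hy, inv_mul_cancel₀ hx]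
      have h1 : (1 : MonoidAlgebra S G) - y * x ∈ RingHom.ker f := by
        rw [RingHom.mem_ker, map_sub, map_one, hyx, sub_self]
      have h2 : y * x ∈ J := Ideal.mul_mem_left J y hxJ
      have := J.add_mem (hIJ h1) h2
      simpa using this
  refine ⟨fun J => ⟨fun hJ => ?_, fun h => h ▸ hmmax⟩, f, hfsurj, hker⟩
  -- J maximal → J = m
  have hJle : J ≤ m := by
    intro b hb
    by_contra hbm
    have hbk : b ∉ RingHom.ker f := by rwa [hker]
    rw [RingHom.mem_ker] at hbk
    obtain ⟨y, hy⟩ := hfsurj (f b)⁻¹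
    have hyb : f (y * b) = 1 := by rw [map_mul, hy, inv_mul_cancel₀ hbk]
    have h1 : (1 : MonoidAlgebra S G) - y * b ∈ RingHom.ker f := by
      rw [RingHom.mem_ker, map_sub, map_one, hyb, sub_self]
    have h2 : IsUnit (y * b) := by
      have := hunit _ h1
      rwa [sub_sub_cancel] at this
    have h3 : y * b ∈ J := Ideal.mul_mem_left J y hb
    exact hJ.ne_top (Ideal.eq_top_of_isUnit_mem J h3 h2)
  exact hJ.eq_of_le hmmax.ne_top hJle
end

section
/- If k is a field of characteristic p and G is a finite p-group, then the augmentation ideal of the group algebra kG is nilpotent. -/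
section Aux

lemma my_list_prod_mem_pow {k A : Type*} [CommSemiring k] [Semiring A] [Algebra k A]
    (V : Submodule k A) : ∀ l : List A, (∀ a ∈ l, a ∈ V) → l.prod ∈ V ^ l.length
  | [], _ => by
      rw [List.prod_nil, List.length_nil, pow_zero]
      exact Submodule.one_le.mp le_rfl
  | a :: t, h => by
      rw [List.prod_cons, List.length_cons, pow_succ']
      exact Submodule.mul_mem_mul (h a (List.mem_cons_self))
        (my_list_prod_mem_pow V t fun b hb => h b (List.mem_cons_of_mem a hb))

lemma my_pow_le_pow {k A : Type*} [CommSemiring k] [Semiring A] [Algebra k A]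
    {M N : Submodule k A} (h : M ≤ N) : ∀ n : ℕ, M ^ n ≤ N ^ n
  | 0 => le_rfl
  | n + 1 => by
      rw [pow_succ, pow_succ]
      exact mul_le_mul' (my_pow_le_pow h n) h

lemma aug_aux (p : ℕ) [Fact p.Prime] (k : Type) [Field k] [CharP k p] :
    ∀ (N : ℕ) (G : Type) [Group G] [Finite G], Nat.card G ≤ N → IsPGroup p G →
    ∃ n : ℕ, ((RingHom.ker
        (((MonoidAlgebra.lift k k G) 1 : MonoidAlgebra k G →ₐ[k] k) :
          MonoidAlgebra k G →+* k)).restrictScalars k) ^ n = ⊥ := by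
  intro N
  induction N with
  | zero =>
      intro G _ _ hle _
      have := Nat.card_pos (α := G)
      omega
  | succ N ih =>
      intro G _ _ hle hG
      by_cases hcard : Nat.card G = 1
      · -- trivial group
        haveI : Subsingleton G := (Nat.card_eq_one_iff_unique.mp hcard).1
        refine ⟨1, ?_⟩
        rw [pow_one, eq_bot_iff]
        intro x hx
        have hx' : ((MonoidAlgebra.lift k k G) 1) x = 0 := hx
        have hxx : x = MonoidAlgebra.single (1 : G) (x.coeff 1) := by
          ext a
          rw [Subsingleton.elim a (1 : G)]
          simp
        rw [hxx, MonoidAlgebra.lift_single] at hx'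
        simp only [MonoidHom.one_apply, smul_eq_mul, mul_one] at hx'
        simp only [Submodule.mem_bot]
        rw [hxx, hx']
        simp
      · -- nontrivial group
        haveI : Nontrivial G := by
          by_contra h
          haveI := not_nontrivial_iff_subsingleton.mp h
          exact hcard (Nat.card_eq_one_iff_unique.mpr ⟨⟨fun a b => Subsingleton.elim a b⟩, ⟨1⟩⟩)
        haveI := hG.center_nontrivial
        obtain ⟨z', hz'⟩ := exists_ne (1 : Subgroup.center G)
        set z : G := (z' : G) with hzdef
        have hz : z ∈ Subgroup.center G := z'.2
        have hz1 : z ≠ 1 := fun h => hz' (Subtype.ext h)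
        set H : Subgroup G := Subgroup.zpowers z with hHdef
        have hHc : H ≤ Subgroup.center G := Subgroup.zpowers_le.mpr hz
        haveI : H.Normal := by
          refine ⟨fun n hn g => ?_⟩
          have h1 : g * n * g⁻¹ = n := by
            rw [Subgroup.mem_center_iff.mp (hHc hn) g, mul_assoc, mul_inv_cancel, mul_one]
          rw [h1]
          exact hn
        -- quotient group
        have hGQ : IsPGroup p (G ⧸ H) := hG.to_quotient H
        have hQle : Nat.card (G ⧸ H) ≤ N := by
          have h2 : 2 ≤ Nat.card H := by
            refine (Subgroup.one_lt_card_iff_ne_bot H).mpr fun hb => hz1 ?_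
            have := Subgroup.mem_zpowers z
            rw [← hHdef, hb, Subgroup.mem_bot] at this
            exact this
          have hmul := Subgroup.card_eq_card_quotient_mul_card_subgroup H
          have h3 : Nat.card (G ⧸ H) * 2 ≤ Nat.card G := by
            rw [hmul]
            exact Nat.mul_le_mul_left _ h2
          have h4 := Nat.card_pos (α := G ⧸ H)
          omega
        obtain ⟨n, hn⟩ := ih (G ⧸ H) hQle hGQ
        set φ : MonoidAlgebra k G →ₐ[k] MonoidAlgebra k (G ⧸ H) :=
          MonoidAlgebra.mapDomainAlgHom k k (QuotientGroup.mk' H) with hφdef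
        set ζ : MonoidAlgebra k G := MonoidAlgebra.of k G z with hζdef
        set J : Ideal (MonoidAlgebra k G) := Ideal.span {ζ - 1} with hJdef
        -- centrality of ζ
        have hcomm : ∀ a : MonoidAlgebra k G, a * ζ = ζ * a := by
          intro a
          induction a using MonoidAlgebra.induction_on with
          | of g =>
              show MonoidAlgebra.of k G g * MonoidAlgebra.of k G z = _
              rw [← map_mul, ← map_mul, Subgroup.mem_center_iff.mp hz g]
          | add f g hf hg => rw [add_mul, mul_add, hf, hg]
          | smul r f hf => rw [smul_mul_assoc, mul_smul_comm, hf]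
        have hcommζ1 : ∀ a : MonoidAlgebra k G, Commute a (ζ - 1) := fun a =>
          show a * (ζ - 1) = (ζ - 1) * a by
            rw [mul_sub, sub_mul, hcomm a, mul_one, one_mul]
        -- char p and nilpotency of ζ - 1
        haveI : CharP (MonoidAlgebra k G) p :=
          charP_of_injective_algebraMap (algebraMap k (MonoidAlgebra k G)).injective p
        obtain ⟨e, he⟩ := hG z
        have hζq : (ζ - 1) ^ p ^ e = 0 := by
          rw [sub_pow_char_pow_of_commute p e (Commute.one_right ζ), one_pow,
            show ζ ^ p ^ e = MonoidAlgebra.of k G (z ^ p ^ e) from (map_pow _ _ _).symm, he,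
            map_one, sub_self]
        -- powers of the ideal J vanish
        have hkey : ∀ i : ℕ, (J.restrictScalars k) ^ i ≤
            LinearMap.range (LinearMap.mulRight k ((ζ - 1) ^ i)) := by
          intro i
          induction i with
          | zero =>
              intro x _
              exact ⟨x, by simp⟩
          | succ i ihh =>
              rw [pow_succ]
              refine Submodule.mul_le.mpr fun m hm b hb => ?_
              obtain ⟨a, ha⟩ := ihh hm
              obtain ⟨c, hc⟩ := Submodule.mem_span_singleton.mp hb
              refine ⟨a * c, ?_⟩
              simp only [LinearMap.mulRight_apply] at ha ⊢
              rw [← ha, ← hc, smul_eq_mul, pow_succ]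
              have hcc : c * (ζ - 1) ^ i = (ζ - 1) ^ i * c := ((hcommζ1 c).pow_right i).eq
              rw [mul_assoc a c, ← mul_assoc c, hcc]
              simp only [mul_assoc]
        have hWq : (J.restrictScalars k) ^ p ^ e = ⊥ := by
          rw [eq_bot_iff]
          intro x hx
          obtain ⟨a, ha⟩ := hkey (p ^ e) hx
          simp only [LinearMap.mulRight_apply, hζq, mul_zero] at ha
          simp only [Submodule.mem_bot]
          exact ha.symm
        -- the augmentation ideal to the n-th power lands in J
        have hεfactor : ((MonoidAlgebra.lift k k (G ⧸ H)) 1).comp φ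
            = (MonoidAlgebra.lift k k G) 1 := by
          apply MonoidAlgebra.algHom_ext
          intro g
          simp [hφdef, MonoidAlgebra.lift_single]
          exact Subsingleton.elim _ _
        have hVJ : ((RingHom.ker
            (((MonoidAlgebra.lift k k G) 1 : MonoidAlgebra k G →ₐ[k] k) :
              MonoidAlgebra k G →+* k)).restrictScalars k) ^ n ≤ J.restrictScalars k := by
          intro x hx
          -- first, φ x = 0
          have hmapV : Submodule.map φ.toLinearMap
              ((RingHom.ker (((MonoidAlgebra.lift k k G) 1 : MonoidAlgebra k G →ₐ[k] k) :
                MonoidAlgebra k G →+* k)).restrictScalars k) ≤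
              ((RingHom.ker (((MonoidAlgebra.lift k k (G ⧸ H)) 1 :
                MonoidAlgebra k (G ⧸ H) →ₐ[k] k) :
                MonoidAlgebra k (G ⧸ H) →+* k)).restrictScalars k) := by
            rintro _ ⟨y, hy, rfl⟩
            have hy' : ((MonoidAlgebra.lift k k G) 1) y = 0 := hy
            have : ((MonoidAlgebra.lift k k (G ⧸ H)) 1) (φ y) = 0 := by
              rw [← AlgHom.comp_apply, hεfactor]
              exact hy'
            exact this
          have h0 : φ x = 0 := by
            have hx2 : φ x ∈ (Submodule.map φ.toLinearMap
                ((RingHom.ker (((MonoidAlgebra.lift k k G) 1 : MonoidAlgebra k G →ₐ[k] k) :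
                  MonoidAlgebra k G →+* k)).restrictScalars k)) ^ n := by
              rw [← Submodule.map_pow]
              exact ⟨x, hx, rfl⟩
            have hx3 := my_pow_le_pow hmapV n hx2
            rw [hn] at hx3
            simpa using hx3
          -- now, x ∈ J via a linear section
          set s : MonoidAlgebra k (G ⧸ H) →ₗ[k] MonoidAlgebra k G :=
            { toFun := MonoidAlgebra.mapDomain Quotient.out
              map_add' := MonoidAlgebra.mapDomain_add _
              map_smul' := fun r x => by ext; simp [Finsupp.mapDomain_smul] } with hsdef
          have hpowJ : ∀ m : ℕ, ζ ^ m - 1 ∈ J := by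
            intro m
            induction m with
            | zero => simpa using J.zero_mem
            | succ m ihm =>
                have : ζ ^ (m + 1) - 1 = ζ ^ m * (ζ - 1) + (ζ ^ m - 1) := by
                  rw [pow_succ, mul_sub, mul_one, sub_add_sub_cancel]
                rw [this]
                exact J.add_mem (Ideal.mul_mem_left J _ (Ideal.subset_span rfl)) ihm
          have hL : ∀ y : MonoidAlgebra k G, y - s (φ y) ∈ J.restrictScalars k := by
            intro y
            induction y using MonoidAlgebra.induction_on with
            | of g =>
                have hφg : φ (MonoidAlgebra.of k G g)
                    = MonoidAlgebra.single (QuotientGroup.mk' H g) 1 := by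
                  simp [hφdef]
                have hsg : s (MonoidAlgebra.single (QuotientGroup.mk' H g) (1:k))
                    = MonoidAlgebra.single (Quotient.out (QuotientGroup.mk' H g : G ⧸ H)) (1:k) := by
                  rw [hsdef]
                  exact MonoidAlgebra.mapDomain_single
                set r : G := Quotient.out (QuotientGroup.mk' H g : G ⧸ H) with hrdef
                have hmem : r⁻¹ * g ∈ H := by
                  have : (QuotientGroup.mk r : G ⧸ H) = QuotientGroup.mk g := by
                    rw [hrdef]
                    exact Quotient.out_eq _
                  exact (QuotientGroup.eq).mp this
                obtain ⟨m, hm⟩ := mem_powers_iff_mem_zpowers.mpr hmem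
                have hm' : z ^ m = r⁻¹ * g := hm
                have hgm : MonoidAlgebra.of k G g = MonoidAlgebra.of k G r * ζ ^ m := by
                  rw [hζdef, ← map_pow, ← map_mul, hm', ← mul_assoc, mul_inv_cancel, one_mul]
                rw [hφg, hsg]
                have : MonoidAlgebra.of k G g - MonoidAlgebra.single r (1:k)
                    = MonoidAlgebra.of k G r * (ζ ^ m - 1) := by
                  rw [mul_sub, mul_one, ← hgm]
                  rfl
                rw [this]
                exact Ideal.mul_mem_left J _ (hpowJ m)
            | add f g hf hg =>
                have : (f + g) - s (φ (f + g)) = (f - s (φ f)) + (g - s (φ g)) := by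
                  rw [map_add, map_add, add_sub_add_comm]
                rw [this]
                exact Submodule.add_mem _ hf hg
            | smul r f hf =>
                have : (r • f) - s (φ (r • f)) = r • (f - s (φ f)) := by
                  rw [map_smul, map_smul, smul_sub]
                rw [this]
                exact Submodule.smul_mem _ r hf
          have := hL x
          rw [h0, map_zero, sub_zero] at this
          exact this
        refine ⟨n * p ^ e, ?_⟩
        rw [pow_mul, eq_bot_iff]
        exact (my_pow_le_pow hVJ (p ^ e)).trans (le_of_eq hWq)

end Aux

/-- **The augmentation ideal of `kG` is nilpotent.**
If `k` is a field of characteristic `p` and `G` is a finite `p`-group, then the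
augmentation ideal `I` of the group algebra `kG` (the kernel of the `k`-algebra
map `kG → k` sending each group element to `1`) is nilpotent: there is `n` such
that every product of `n` elements of `I` vanishes (i.e. `I ^ n = 0`). -/
theorem augmentationIdeal_isNilpotent
    (p : ℕ) [Fact p.Prime] (k : Type) [Field k] [CharP k p]
    (G : Type) [Group G] [Finite G] (hG : IsPGroup p G)
    (I : Ideal (MonoidAlgebra k G))
    (hI : I = RingHom.ker
      (((MonoidAlgebra.lift k k G) 1 : MonoidAlgebra k G →ₐ[k] k) : MonoidAlgebra k G →+* k)) :
    ∃ n : ℕ, ∀ l : List (MonoidAlgebra k G),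
      l.length = n → (∀ a ∈ l, a ∈ I) → l.prod = 0 := by
  subst hI
  obtain ⟨n, hn⟩ := aug_aux p k (Nat.card G) G le_rfl hG
  refine ⟨n, fun l hl hmem => ?_⟩
  have := my_list_prod_mem_pow ((RingHom.ker
      (((MonoidAlgebra.lift k k G) 1 : MonoidAlgebra k G →ₐ[k] k) :
        MonoidAlgebra k G →+* k)).restrictScalars k) l
    fun a ha => (Submodule.restrictScalars_mem _ _ _).mpr (hmem a ha)
  rw [hl, hn] at this
  exact this
end

section
/- Let G be a finite group, A a G-module, and N a normal subgroup of G such that H^i(N,A) = 0 for i = 1, …, n−1 (n ≥ 1). Then the sequence 0 → H^n(G/N, A^N) → H^n(G,A) → H^n(N,A), with maps given by inflation and restriction, is exact. -/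
/-! ## Tate cohomology of a finite group via the complete standard resolution

The action of `G` on the abelian group `A` is recorded by an explicit
homomorphism `σ : G →* AddAut A`. -/

/-- The multiplicative group structure (composition) on `AddAut A`, as in the older Mathlib. -/
instance addAutGroupOld {A : Type*} [Add A] : Group (AddAut A) where
  mul g h := AddEquiv.trans h g
  one := AddEquiv.refl _
  inv := AddEquiv.symm
  mul_assoc _ _ _ := rfl
  one_mul _ := rfl
  mul_one _ := rfl
  inv_mul_cancel := AddEquiv.self_trans_symm

namespace TateAux

variable {G : Type} [Group G] [Fintype G] {A : Type} [AddCommGroup A]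

/-- Inhomogeneous cochain differential (as in the bar resolution). -/
def cochainD (σ : G →* AddAut A) (m : ℕ) : ((Fin m → G) → A) →+ ((Fin (m + 1) → G) → A) where
  toFun f := fun g =>
    σ (g 0) (f (fun i => g i.succ)) +
      ∑ j : Fin (m + 1), ((-1 : ℤ) ^ ((j : ℕ) + 1)) • f (Fin.contractNth j (· * ·) g)
  map_zero' := by funext g; simp
  map_add' f₁ f₂ := by
    funext g
    simp only [Pi.add_apply, map_add, smul_add, Finset.sum_add_distrib]
    abel

/-- Inhomogeneous chain differential (transposed to functions; `G` is finite). -/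
def chainD (σ : G →* AddAut A) (m : ℕ) : ((Fin (m + 1) → G) → A) →+ ((Fin m → G) → A) where
  toFun f := fun h =>
    ∑ g : G,
      (σ g⁻¹ (f (Fin.cons g h)) +
        (∑ j : Fin m, ((-1 : ℤ) ^ ((j : ℕ) + 1)) •
          f (Fin.insertNth j.castSucc g (Function.update h j (g⁻¹ * h j)))) +
        ((-1 : ℤ) ^ (m + 1)) • f (Fin.snoc h g))
  map_zero' := by funext h; simp
  map_add' f₁ f₂ := by
    funext h
    simp only [Pi.add_apply, map_add, smul_add, Finset.sum_add_distrib]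
    abel

/-- The norm map, splicing the chain and cochain parts of the complete resolution. -/
def normD (σ : G →* AddAut A) : ((Fin 0 → G) → A) →+ ((Fin 0 → G) → A) where
  toFun f := fun h => ∑ g : G, σ g (f h)
  map_zero' := by funext h; simp
  map_add' f₁ f₂ := by funext h; simp [Finset.sum_add_distrib]

/-- Dimension function for the complete standard complex. -/
def tdim : ℤ → ℕ
  | .ofNat k => k
  | .negSucc k => k

/-- The complete standard complex (in degree `n`, inhomogeneous cochains `G^(tdim n) → A`). -/
def TC (G A : Type) (n : ℤ) : Type := (Fin (tdim n) → G) → A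

instance (n : ℤ) : AddCommGroup (TC G A n) :=
  inferInstanceAs (AddCommGroup ((Fin (tdim n) → G) → A))

/-- The differential of the complete standard complex. -/
def tateD (σ : G →* AddAut A) : ∀ n : ℤ, TC G A n →+ TC G A (n + 1)
  | .ofNat k => cochainD σ k
  | .negSucc 0 => normD σ
  | .negSucc (k + 1) => chainD σ k

/-- The incoming differential in degree `n`. -/
def tateDpred (σ : G →* AddAut A) (n : ℤ) : TC G A (n - 1) →+ TC G A n :=
  cast (congrArg (fun m : ℤ => TC G A (n - 1) →+ TC G A m) (by omega : n - 1 + 1 = n))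
    (tateD σ (n - 1))

/-- Tate cohomology `Ĥ^n(G, A)` of the finite group `G` with coefficients in the
`G`-module `(A, σ)`. -/
def tateH (σ : G →* AddAut A) (n : ℤ) : Type :=
  (AddMonoidHom.ker (tateD σ n)) ⧸
    ((AddMonoidHom.range (tateDpred σ n)).addSubgroupOf (AddMonoidHom.ker (tateD σ n)))

/-- `A` is cohomologically trivial over `G`: the Tate cohomology groups of all
subgroups of `G` in all degrees vanish. -/
def IsCohomologicallyTrivial (σ : G →* AddAut A) : Prop :=
  ∀ (S : Subgroup G) (n : ℤ),
    letI : Fintype S := Fintype.ofFinite S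
    Subsingleton (tateH (σ.comp S.subtype) n)

end TateAux


section InfRes

variable {G : Type} [Group G] {A : Type} [AddCommGroup A]

/-- The fixed points `A^N` of a subgroup `N` acting on `A`. -/
def fixedSub (σ : G →* AddAut A) (N : Subgroup G) : AddSubgroup A where
  carrier := {a : A | ∀ n ∈ N, σ n a = a}
  zero_mem' := fun n _ => map_zero (σ n)
  add_mem' := fun {a b} ha hb n hn => by rw [map_add, ha n hn, hb n hn]
  neg_mem' := fun {a} ha n hn => by rw [map_neg, ha n hn]

theorem smul_mem_fixedSub (σ : G →* AddAut A) (N : Subgroup G) [hN : N.Normal]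
    (g : G) (a : A) (ha : a ∈ fixedSub σ N) : σ g a ∈ fixedSub σ N := by
  intro n hn
  have hm : g⁻¹ * n * g ∈ N := by
    have := hN.conj_mem n hn g⁻¹
    rwa [inv_inv] at this
  calc σ n (σ g a) = (σ n * σ g) a := rfl
    _ = σ (n * g) a := by rw [← map_mul]
    _ = σ (g * (g⁻¹ * n * g)) a := by group
    _ = (σ g * σ (g⁻¹ * n * g)) a := by rw [← map_mul]
    _ = σ g (σ (g⁻¹ * n * g) a) := rfl
    _ = σ g a := by rw [ha _ hm]

/-- The action of `G/N` on the `N`-fixed points `A^N`, for `N` normal. -/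
noncomputable def quotAut (σ : G →* AddAut A) (N : Subgroup G) [hN : N.Normal] :
    G ⧸ N →* AddAut (fixedSub σ N) :=
  QuotientGroup.lift N
    { toFun := fun g =>
        { toFun := fun a => ⟨σ g a, smul_mem_fixedSub σ N g a a.2⟩
          invFun := fun a => ⟨σ g⁻¹ a, smul_mem_fixedSub σ N g⁻¹ a a.2⟩
          left_inv := fun a => Subtype.ext <| by
            show σ g⁻¹ (σ g ↑a) = ↑a
            calc σ g⁻¹ (σ g ↑a) = (σ g⁻¹ * σ g) ↑a := rfl
              _ = σ (g⁻¹ * g) ↑a := by rw [← map_mul]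
              _ = ↑a := by rw [inv_mul_cancel, map_one]; rfl
          right_inv := fun a => Subtype.ext <| by
            show σ g (σ g⁻¹ ↑a) = ↑a
            calc σ g (σ g⁻¹ ↑a) = (σ g * σ g⁻¹) ↑a := rfl
              _ = σ (g * g⁻¹) ↑a := by rw [← map_mul]
              _ = ↑a := by rw [mul_inv_cancel, map_one]; rfl
          map_add' := fun a b => Subtype.ext <| by
            show σ g (↑a + ↑b) = σ g ↑a + σ g ↑b
            rw [map_add] }
      map_one' := by
        ext a
        show σ 1 ↑a = ↑a
        rw [map_one]; rfl
      map_mul' := fun g h => by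
        ext a
        show σ (g * h) ↑a = σ g (σ h ↑a)
        rw [map_mul]; rfl }
    (fun n hn => by
      ext a
      show σ n ↑a = ↑a
      exact a.2 n hn)

end InfRes

section InfRes

variable {G : Type} [Group G] {A : Type} [AddCommGroup A]

/-- The inflation map on inhomogeneous cochains, from cochains of `G/N` with
values in `A^N` to cochains of `G` with values in `A`. -/
def inflMap (σ : G →* AddAut A) (N : Subgroup G) (m' : ℕ)
    (f : (Fin m' → G ⧸ N) → (fixedSub σ N)) : (Fin m' → G) → A :=
  fun g => ↑(f fun i => QuotientGroup.mk (g i))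

/-- The restriction map on inhomogeneous cochains, from cochains of `G` to
cochains of a subgroup `N`. -/
def resMap (N : Subgroup G) (m' : ℕ) (f : (Fin m' → G) → A) : (Fin m' → ↥N) → A :=
  fun s => f fun i => ↑(s i)

end InfRes
namespace InfResAux
open TateAux groupCohomology

/-! ### Fin.contractNth lemmas -/

lemma contractNth_map {α β : Type} (φ : α → β) (op : α → α → α) (op' : β → β → β)
    (hφ : ∀ a b, φ (op a b) = op' (φ a) (φ b)) {n : ℕ} (j : Fin (n + 1)) (g : Fin (n + 1) → α) :
    (fun i => φ (Fin.contractNth j op g i)) = Fin.contractNth j op' (fun i => φ (g i)) := by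
  funext i
  rcases lt_trichotomy (i : ℕ) (j : ℕ) with h | h | h
  · rw [Fin.contractNth_apply_of_lt _ _ _ _ h, Fin.contractNth_apply_of_lt _ _ _ _ h]
  · rw [Fin.contractNth_apply_of_eq _ _ _ _ h, Fin.contractNth_apply_of_eq _ _ _ _ h, hφ]
  · rw [Fin.contractNth_apply_of_gt _ _ _ _ h, Fin.contractNth_apply_of_gt _ _ _ _ h]

lemma contractNth_cons_zero {α : Type} (op : α → α → α) {n : ℕ} (a : α) (g : Fin (n + 1) → α) :
    Fin.contractNth 0 op (Fin.cons a g) = Fin.cons (op a (g 0)) (fun i => g i.succ) := by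
  funext i
  induction i using Fin.cases with
  | zero =>
      rw [Fin.contractNth_apply_of_eq _ _ _ _ (by simp)]
      simp
  | succ i =>
      rw [Fin.contractNth_apply_of_gt _ _ _ _ (by simp)]
      simp

lemma contractNth_cons_succ {α : Type} (op : α → α → α) {n : ℕ} (j : Fin (n + 1)) (a : α)
    (g : Fin (n + 1) → α) :
    Fin.contractNth j.succ op (Fin.cons a g) = Fin.cons a (Fin.contractNth j op g) := by
  funext i
  induction i using Fin.cases with
  | zero =>
      rw [Fin.contractNth_apply_of_lt _ _ _ _ (by simp)]
      simp
  | succ i =>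
      rcases lt_trichotomy (i : ℕ) (j : ℕ) with h | h | h
      · rw [Fin.contractNth_apply_of_lt _ _ _ _ (by simpa)]
        simp only [Fin.castSucc_fin_succ, Fin.cons_succ]
        rw [Fin.contractNth_apply_of_lt _ _ _ _ h]
      · rw [Fin.contractNth_apply_of_eq _ _ _ _ (by simpa)]
        simp only [Fin.castSucc_fin_succ, Fin.cons_succ]
        rw [Fin.contractNth_apply_of_eq _ _ _ _ h]
      · rw [Fin.contractNth_apply_of_gt _ _ _ _ (by simpa)]
        simp only [Fin.castSucc_fin_succ, Fin.cons_succ]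
        rw [Fin.contractNth_apply_of_gt _ _ _ _ h]

/-! ### d ∘ d = 0, via mathlib's `inhomogeneousCochains` -/

variable {K : Type} [Group K] {M M' : Type} [AddCommGroup M] [AddCommGroup M']

/-- The representation attached to `τ`. -/
noncomputable def toRep (τ : K →* AddAut M) : Rep ℤ K :=
  Rep.of (X := M)
    { toFun := fun k => (τ k).toAddMonoidHom.toIntLinearMap
      map_one' := by ext a; simp; rfl
      map_mul' := fun a b => by ext x; simp; rfl }

lemma cochainD_eq_d (τ : K →* AddAut M) (n : ℕ) (f : (Fin n → K) → M) :
    cochainD τ n f = (inhomogeneousCochains.d (toRep τ) n).hom f := rfl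

lemma dd (τ : K →* AddAut M) (n : ℕ) (f : (Fin n → K) → M) :
    cochainD τ (n + 1) (cochainD τ n f) = 0 := by
  rw [cochainD_eq_d, cochainD_eq_d]
  have h := (inhomogeneousCochains (toRep τ)).d_comp_d n (n+1) (n+1+1)
  rw [groupCohomology.inhomogeneousCochains.d_def, groupCohomology.inhomogeneousCochains.d_def] at h
  exact congrArg (fun φ => φ.hom f) h

/-! ### Functoriality of the differential -/

/-- Pushing cochains forward along an equivariant map commutes with the differential. -/
lemma cochainD_push (τ : K →* AddAut M) (τ' : K →* AddAut M') (φ : M →+ M')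
    (hφ : ∀ k a, φ (τ k a) = τ' k (φ a)) (n : ℕ) (f : (Fin n → K) → M) :
    cochainD τ' n (fun x => φ (f x)) = fun x => φ (cochainD τ n f x) := by
  funext g
  show τ' (g 0) (φ (f fun i => g i.succ)) + _ = φ (τ (g 0) (f fun i => g i.succ) + _)
  rw [map_add, ← hφ, map_sum]
  congr 1
  refine Finset.sum_congr rfl fun j _ => ?_
  rw [map_zsmul]

/-- Pulling cochains back along a group homomorphism commutes with the differential. -/
lemma cochainD_pull {K' : Type} [Group K'] (τ : K →* AddAut M) (π : K' →* K) (n : ℕ)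
    (f : (Fin n → K) → M) :
    cochainD (τ.comp π) n (fun x => f (fun i => π (x i))) =
      fun x => cochainD τ n f (fun i => π (x i)) := by
  funext g
  show τ (π (g 0)) (f fun i => π (g i.succ)) + _ = τ ((fun i => π (g i)) 0) _ + _
  congr 1
  refine Finset.sum_congr rfl fun j _ => ?_
  have := contractNth_map (fun x => π x) (· * ·) (· * ·) (fun a b => map_mul π a b) j g
  simp only [← this]

/-- The basic expansion of the differential. -/
lemma cochainD_apply (τ : K →* AddAut M) (m : ℕ) (f : (Fin m → K) → M) (g : Fin (m + 1) → K) :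
    cochainD τ m f g =
      τ (g 0) (f (fun i => g i.succ)) +
        ∑ j : Fin (m + 1), ((-1 : ℤ) ^ ((j : ℕ) + 1)) • f (Fin.contractNth j (· * ·) g) := rfl

/-- Vanishing of the (j+1)-st cohomology: every cocycle is a coboundary. -/
def Vanish (τ : K →* AddAut M) (j : ℕ) : Prop :=
  ∀ f, cochainD τ (j + 1) f = 0 → ∃ e, cochainD τ j e = f

lemma vanish_transfer (τ : K →* AddAut M) (τ' : K →* AddAut M') (ψ : M' ≃+ M)
    (hψ : ∀ k m', ψ (τ' k m') = τ k (ψ m')) (n : ℕ) (h : Vanish τ n) : Vanish τ' n := by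
  intro F' hF'
  have hc : ∀ x : M', ψ.toAddMonoidHom x = ψ x := fun _ => rfl
  have h1 := cochainD_push τ' τ ψ.toAddMonoidHom hψ (n + 1) F'
  simp only [hc] at h1
  rw [hF'] at h1
  have h1' : cochainD τ (n + 1) (fun x => ψ (F' x)) = 0 := by
    rw [h1]; funext x; simp
  obtain ⟨E, hE⟩ := h _ h1'
  refine ⟨fun x => ψ.symm (E x), ?_⟩
  have h2 := cochainD_push τ' τ ψ.toAddMonoidHom hψ n (fun x => ψ.symm (E x))
  simp only [hc] at h2
  have h3 : (fun y => ψ (ψ.symm (E y))) = E := by funext y; simp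
  rw [h3, hE] at h2
  funext x
  apply ψ.injective
  exact (congrFun h2 x).symm

end InfResAux
namespace InfResAux
open TateAux

section Coind

variable {K : Type} [Group K] {M : Type} [AddCommGroup M] {X : Type}
variable (act : X → K → X)

/-- The coinduced module structure on `X → M` for a right action of `K` on `X`. -/
def coindAut (h1 : ∀ x, act x 1 = x) (hm : ∀ x a b, act x (a * b) = act (act x a) b) :
    K →* AddAut (X → M) where
  toFun k :=
    { toFun := fun f x => f (act x k)
      invFun := fun f x => f (act x k⁻¹)
      left_inv := fun f => by
        funext x; simp only []; rw [← hm, inv_mul_cancel, h1]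
      right_inv := fun f => by
        funext x; simp only []; rw [← hm, mul_inv_cancel, h1]
      map_add' := fun f f' => rfl }
  map_one' := by ext f x; show f (act x 1) = f x; rw [h1]
  map_mul' := fun a b => by ext f x; show f (act x (a * b)) = f (act (act x a) b); rw [hm]

lemma expand_cochainD (τ : K →* AddAut (X → M)) (hτ : ∀ k f x, τ k f x = f (act x k))
    (m : ℕ) (f : (Fin m → K) → X → M) (h : Fin (m + 1) → K) (y : X) :
    cochainD τ m f h y =
      f (fun i => h i.succ) (act y (h 0)) +
        ∑ j : Fin (m + 1), ((-1 : ℤ) ^ ((j : ℕ) + 1)) • f (Fin.contractNth j (· * ·) h) y := by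
  show (τ (h 0) (f fun i => h i.succ) + _) y = _
  rw [Pi.add_apply, Finset.sum_apply, hτ]
  simp only [Pi.smul_apply]

/-- Vanishing of the higher cohomology of a coinduced module, given section data
witnessing freeness of the action. -/
lemma coind_vanish (τ : K →* AddAut (X → M)) (hτ : ∀ k f x, τ k f x = f (act x k))
    (T : X → X) (κ : X → K)
    (hT : ∀ x k, T (act x k) = T x) (hκ : ∀ x k, κ (act x k) = κ x * k)
    (hsec : ∀ x, act (T x) (κ x) = x) (n : ℕ) : Vanish τ n := by
  intro F hF
  refine ⟨fun k x => F (Fin.cons (κ x) k) (T x), ?_⟩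
  funext g x
  rw [expand_cochainD act τ hτ]
  have h0 : cochainD τ (n + 1) F (Fin.cons (κ x) g) (T x) = 0 := by rw [hF]; rfl
  rw [expand_cochainD act τ hτ] at h0
  simp only [Fin.cons_succ, Fin.cons_zero, hsec] at h0
  rw [Fin.sum_univ_succ] at h0
  rw [contractNth_cons_zero] at h0
  simp only [hκ, hT]
  have hrw : ∀ j : Fin (n + 1),
      ((-1 : ℤ) ^ ((j.succ : ℕ) + 1)) •
          F (Fin.contractNth j.succ (· * ·) (Fin.cons (κ x) g)) (T x) =
        -(((-1 : ℤ) ^ ((j : ℕ) + 1)) •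
          F (Fin.cons (κ x) (Fin.contractNth j (· * ·) g)) (T x)) := by
    intro j
    rw [contractNth_cons_succ, Fin.val_succ, pow_succ, mul_neg_one, neg_smul]
  rw [Finset.sum_congr rfl fun j _ => hrw j, Finset.sum_neg_distrib] at h0
  simp only [Fin.val_zero, zero_add, pow_one, neg_smul, one_smul] at h0
  rw [eq_comm, ← sub_eq_zero, ← h0]
  abel

end Coind

end InfResAux
namespace InfResAux
open TateAux

section Modules

variable {G : Type} [Group G] {A : Type} [AddCommGroup A]

/-- Right translation action on `G → A`. -/
def tauC (G : Type) [Group G] (A : Type) [AddCommGroup A] : G →* AddAut (G → A) :=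
  coindAut (fun x g => x * g) mul_one (fun x a b => (mul_assoc x a b).symm)

lemma tauC_apply (g : G) (f : G → A) (x : G) : tauC G A g f x = f (x * g) := rfl

/-- The equivariant embedding `A → (G → A)`. -/
def iota (σ : G →* AddAut A) : A →+ (G → A) where
  toFun a := fun x => σ x a
  map_zero' := by funext x; simp
  map_add' a b := by funext x; simp

lemma iota_inj (σ : G →* AddAut A) {a b : A} (h : iota σ a = iota σ b) : a = b := by
  have h1 := congrFun h 1
  simpa [iota] using h1

lemma iota_equiv (σ : G →* AddAut A) (g : G) (a : A) :
    iota σ (σ g a) = tauC G A g (iota σ a) := by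
  funext x
  show σ x (σ g a) = σ (x * g) a
  rw [map_mul]
  rfl

/-- The complement of `ι(A)` in `G → A`. -/
def Bsub (G : Type) [Group G] (A : Type) [AddCommGroup A] : AddSubgroup (G → A) where
  carrier := {f | f 1 = 0}
  zero_mem' := rfl
  add_mem' := fun {a b} (ha : a 1 = 0) (hb : b 1 = 0) => by
    show a 1 + b 1 = 0; rw [ha, hb, add_zero]
  neg_mem' := fun {a} (ha : a 1 = 0) => by show -(a 1) = 0; rw [ha, neg_zero]

/-- Projection of `G → A` onto the complement `Bsub`, with kernel `ι(A)`. -/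
def piB (σ : G →* AddAut A) : (G → A) →+ Bsub G A where
  toFun f := ⟨f - iota σ (f 1), by show f 1 - σ 1 (f 1) = 0; rw [map_one]; exact sub_self _⟩
  map_zero' := by apply Subtype.ext; show (0 : G → A) - iota σ (0 : A) = 0; simp
  map_add' f g := by
    apply Subtype.ext
    show (f + g) - iota σ ((f + g) 1) = (f - iota σ (f 1)) + (g - iota σ (g 1))
    rw [Pi.add_apply, map_add]
    abel

lemma piB_val (σ : G →* AddAut A) (b : Bsub G A) : piB σ ↑b = b := by
  apply Subtype.ext
  show ↑b - iota σ ((b : G → A) 1) = ↑b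
  rw [show ((b : G → A) 1) = 0 from b.2, map_zero, sub_zero]

lemma piB_iota (σ : G →* AddAut A) (a : A) : piB σ (iota σ a) = 0 := by
  apply Subtype.ext
  show iota σ a - iota σ (σ 1 a) = 0
  rw [map_one]
  show iota σ a - iota σ a = 0
  simp

lemma ker_piB (σ : G →* AddAut A) {f : G → A} (h : piB σ f = 0) : f = iota σ (f 1) := by
  have h1 : f - iota σ (f 1) = 0 := congrArg Subtype.val h
  rwa [sub_eq_zero] at h1

lemma piB_tauC (σ : G →* AddAut A) (g : G) (f : G → A) :
    piB σ (tauC G A g ((piB σ f : Bsub G A) : G → A)) = piB σ (tauC G A g f) := by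
  have hval : ((piB σ f : Bsub G A) : G → A) = f - iota σ (f 1) := rfl
  rw [hval, map_sub, map_sub, ← iota_equiv, piB_iota, sub_zero]

/-- The quotient action of `G` on `Bsub`. -/
def tauB (σ : G →* AddAut A) : G →* AddAut (Bsub G A) where
  toFun g :=
    { toFun := fun b => piB σ (tauC G A g ↑b)
      invFun := fun b => piB σ (tauC G A g⁻¹ ↑b)
      left_inv := fun b => by
        simp only []
        rw [piB_tauC]
        have : tauC G A g⁻¹ (tauC G A g ↑b) = ↑b := by
          funext x
          show (b : G → A) (x * g⁻¹ * g) = (b : G → A) x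
          rw [inv_mul_cancel_right]
        rw [this, piB_val]
      right_inv := fun b => by
        simp only []
        rw [piB_tauC]
        have : tauC G A g (tauC G A g⁻¹ ↑b) = ↑b := by
          funext x
          show (b : G → A) (x * g * g⁻¹) = (b : G → A) x
          rw [mul_inv_cancel_right]
        rw [this, piB_val]
      map_add' := fun b b' => by
        show piB σ (tauC G A g (↑b + ↑b')) = _
        rw [map_add, map_add] }
  map_one' := by
    have key : ∀ b : Bsub G A, piB σ (tauC G A 1 ↑b) = b := fun b => by
      rw [map_one]
      show piB σ ↑b = b
      exact piB_val σ b
    exact AddEquiv.ext fun b => key b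
  map_mul' g h := by
    have key : ∀ b : Bsub G A,
        piB σ (tauC G A (g * h) ↑b) =
          piB σ (tauC G A g ((piB σ (tauC G A h ↑b) : Bsub G A) : G → A)) := fun b => by
      rw [piB_tauC]
      have hc : tauC G A g (tauC G A h ↑b) = tauC G A (g * h) ↑b := by
        funext x
        show (b : G → A) (x * g * h) = (b : G → A) (x * (g * h))
        rw [mul_assoc]
      rw [hc]
    exact AddEquiv.ext fun b => key b

lemma tauB_apply (σ : G →* AddAut A) (g : G) (b : Bsub G A) :
    tauB σ g b = piB σ (tauC G A g ↑b) := rfl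

lemma piB_equiv (σ : G →* AddAut A) (g : G) (f : G → A) :
    piB σ (tauC G A g f) = tauB σ g (piB σ f) := by
  rw [tauB_apply, piB_tauC]

end Modules

end InfResAux
namespace InfResAux
open TateAux

section NLevel

variable {G : Type} [Group G] {A : Type} [AddCommGroup A]
variable (σ : G →* AddAut A) (N : Subgroup G) [N.Normal]

/-- `ι` restricted to `N`-fixed points. -/
def iotaN : fixedSub σ N →+ fixedSub (tauC G A) N where
  toFun a := ⟨iota σ ↑a, fun n hn => by
    funext x
    show σ (x * n) ↑a = σ x ↑a
    rw [map_mul]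
    show σ x (σ n ↑a) = σ x ↑a
    rw [a.2 n hn]⟩
  map_zero' := by apply Subtype.ext; show iota σ 0 = 0; rw [map_zero]
  map_add' a b := by apply Subtype.ext; show iota σ (↑a + ↑b) = _; rw [map_add]; rfl

omit [N.Normal] in
lemma iotaN_inj {a b : fixedSub σ N} (h : iotaN σ N a = iotaN σ N b) : a = b := by
  apply Subtype.ext
  exact iota_inj σ (congrArg Subtype.val h)

lemma iotaN_equiv (q : G ⧸ N) (a : fixedSub σ N) :
    iotaN σ N (quotAut σ N q a) = quotAut (tauC G A) N q (iotaN σ N a) := by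
  induction q using QuotientGroup.induction_on with
  | H g => exact Subtype.ext (iota_equiv σ g ↑a)

/-- `π` restricted to `N`-fixed points. -/
def piBN : fixedSub (tauC G A) N →+ fixedSub (tauB σ) N where
  toFun c := ⟨piB σ ↑c, fun n hn => by
    show tauB σ n (piB σ ↑c) = piB σ ↑c
    rw [← piB_equiv, c.2 n hn]⟩
  map_zero' := by apply Subtype.ext; show piB σ 0 = 0; rw [map_zero]
  map_add' a b := by apply Subtype.ext; show piB σ (↑a + ↑b) = _; rw [map_add]; rfl

lemma piBN_equiv (q : G ⧸ N) (c : fixedSub (tauC G A) N) :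
    piBN σ N (quotAut (tauC G A) N q c) = quotAut (tauB σ) N q (piBN σ N c) := by
  induction q using QuotientGroup.induction_on with
  | H g => exact Subtype.ext (piB_equiv σ g ↑c)

omit [N.Normal] in
lemma piBN_iotaN (a : fixedSub σ N) : piBN σ N (iotaN σ N a) = 0 :=
  Subtype.ext (piB_iota σ ↑a)

lemma ker_piBN (c : fixedSub (tauC G A) N) (h : piBN σ N c = 0) :
    ∃ a : fixedSub σ N, iotaN σ N a = c := by
  have h0 : piB σ ↑c = 0 := Subtype.ext_iff.mp h
  have h1 : (c : G → A) = iota σ ((c : G → A) 1) := ker_piB σ h0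
  have hmem : (c : G → A) 1 ∈ fixedSub σ N := by
    intro n hn
    have h2 : (c : G → A) (1 * n) = (c : G → A) 1 := congrFun (c.2 n hn) 1
    rw [one_mul] at h2
    have h3 : (c : G → A) n = σ n ((c : G → A) 1) := congrFun h1 n
    rw [← h3, h2]
  exact ⟨⟨(c : G → A) 1, hmem⟩, Subtype.ext h1.symm⟩

end NLevel

end InfResAux
namespace InfResAux
open TateAux

section Vanishing

variable {G : Type} [Group G] {A : Type} [AddCommGroup A]

lemma vanishC_G (n : ℕ) : Vanish (tauC G A) n :=
  coind_vanish (fun (x : G) (g : G) => x * g) (tauC G A) (fun _ _ _ => rfl)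
    (fun _ => 1) (fun x => x) (fun _ _ => rfl) (fun _ _ => rfl) (fun x => one_mul x) n

variable (N : Subgroup G) [N.Normal]

lemma vanishC_N (n : ℕ) : Vanish ((tauC G A).comp N.subtype) n := by
  have hmem : ∀ x : G, ((QuotientGroup.mk x : G ⧸ N)).out⁻¹ * x ∈ N := fun x =>
    QuotientGroup.eq.mp (QuotientGroup.out_eq' (QuotientGroup.mk x))
  refine coind_vanish (fun (x : G) (k : N) => x * (k : G)) ((tauC G A).comp N.subtype)
    (fun _ _ _ => rfl) (fun x => ((QuotientGroup.mk x : G ⧸ N)).out)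
    (fun x => ⟨((QuotientGroup.mk x : G ⧸ N)).out⁻¹ * x, hmem x⟩) ?_ ?_ ?_ n
  · intro x k
    show ((QuotientGroup.mk (x * ↑k) : G ⧸ N)).out = ((QuotientGroup.mk x : G ⧸ N)).out
    rw [QuotientGroup.mk_mul_of_mem x k.2]
  · intro x k
    apply Subtype.ext
    show ((QuotientGroup.mk (x * ↑k) : G ⧸ N)).out⁻¹ * (x * ↑k) =
      (((QuotientGroup.mk x : G ⧸ N)).out⁻¹ * x) * ↑k
    rw [QuotientGroup.mk_mul_of_mem x k.2, mul_assoc]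
  · intro x
    exact mul_inv_cancel_left _ _

/-- The `N`-fixed points of `G → A` are the coinduced `G/N`-module `G/N → A`. -/
noncomputable def PsiCN : ((G ⧸ N) → A) ≃+ fixedSub (tauC G A) N where
  toFun F := ⟨fun x => F (QuotientGroup.mk x), fun n hn => by
    funext x
    show F (QuotientGroup.mk (x * n)) = F (QuotientGroup.mk x)
    rw [QuotientGroup.mk_mul_of_mem x hn]⟩
  invFun c := fun q => (c : G → A) q.out
  left_inv F := by
    funext q
    show F (QuotientGroup.mk q.out) = F q
    rw [QuotientGroup.out_eq']
  right_inv c := by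
    apply Subtype.ext
    funext x
    show (c : G → A) (QuotientGroup.mk x : G ⧸ N).out = (c : G → A) x
    have hmem : x⁻¹ * (QuotientGroup.mk x : G ⧸ N).out ∈ N :=
      QuotientGroup.eq.mp (QuotientGroup.out_eq' (QuotientGroup.mk x)).symm
    have h2 : (c : G → A) (x * (x⁻¹ * (QuotientGroup.mk x : G ⧸ N).out)) = (c : G → A) x :=
      congrFun (c.2 _ hmem) x
    rwa [mul_inv_cancel_left] at h2
  map_add' F F' := by apply Subtype.ext; rfl

lemma PsiCN_equiv (q : G ⧸ N) (F : (G ⧸ N) → A) :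
    PsiCN N (tauC (G ⧸ N) A q F) = quotAut (tauC G A) N q (PsiCN N F) := by
  induction q using QuotientGroup.induction_on with
  | H g =>
    apply Subtype.ext
    funext x
    show F (QuotientGroup.mk x * QuotientGroup.mk g) = F (QuotientGroup.mk (x * g))
    rfl

lemma vanishC_quot (n : ℕ) : Vanish (quotAut (tauC G A) N) n :=
  vanish_transfer (tauC (G ⧸ N) A) (quotAut (tauC G A) N) (PsiCN N).symm
    (fun q c => by
      apply (PsiCN N).injective
      rw [AddEquiv.apply_symm_apply]
      rw [PsiCN_equiv N q ((PsiCN N).symm c), AddEquiv.apply_symm_apply])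
    n (vanishC_G n)

end Vanishing

section Commute

variable {G : Type} [Group G] {M : Type} [AddCommGroup M]
variable (τ : G →* AddAut M) (N : Subgroup G) [N.Normal]

lemma infl_d (k : ℕ) (f : (Fin k → G ⧸ N) → fixedSub τ N) :
    cochainD τ k (inflMap τ N k f) = inflMap τ N (k + 1) (cochainD (quotAut τ N) k f) := by
  have hpull : cochainD ((quotAut τ N).comp (QuotientGroup.mk' N)) k
      (fun x => f (fun i => QuotientGroup.mk (x i))) =
        fun x => cochainD (quotAut τ N) k f (fun i => QuotientGroup.mk (x i)) :=
    cochainD_pull (quotAut τ N) (QuotientGroup.mk' N) k f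
  have hpush : cochainD τ k
      (fun x => ((f (fun i => QuotientGroup.mk (x i)) : fixedSub τ N) : M)) =
        fun x => ((cochainD ((quotAut τ N).comp (QuotientGroup.mk' N)) k
          (fun x => f (fun i => QuotientGroup.mk (x i))) x : fixedSub τ N) : M) :=
    cochainD_push ((quotAut τ N).comp (QuotientGroup.mk' N)) τ
      (fixedSub τ N).subtype (fun g a => rfl) k _
  have h1 : inflMap τ N k f =
      fun x => ((f (fun i => QuotientGroup.mk (x i)) : fixedSub τ N) : M) := rfl
  rw [h1, hpush, hpull]
  rfl

lemma res_d (k : ℕ) (f : (Fin k → G) → M) :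
    cochainD (τ.comp N.subtype) k (resMap N k f) = resMap N (k + 1) (cochainD τ k f) :=
  cochainD_pull τ N.subtype k f

end Commute

end InfResAux
namespace InfResAux
open TateAux

section LowDegree

variable {K : Type} [Group K] {M : Type} [AddCommGroup M] (τ : K →* AddAut M)

lemma tuple0_eq (f : (Fin 0 → K) → M) (x : Fin 0 → K) : f x = f (fun i => i.elim0) :=
  congrArg f (funext fun i => i.elim0)

lemma tuple1_eq (f : (Fin 1 → K) → M) (x : Fin 1 → K) : f x = f (fun _ => x 0) :=
  congrArg f (funext fun i => by rw [Subsingleton.elim i 0])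

lemma cochainD_zero_apply (f : (Fin 0 → K) → M) (s : Fin 1 → K) :
    cochainD τ 0 f s = τ (s 0) (f (fun i => i.elim0)) - f (fun i => i.elim0) := by
  rw [cochainD_apply, Fin.sum_univ_one]
  rw [tuple0_eq f (fun i => s i.succ), tuple0_eq f (Fin.contractNth 0 (· * ·) s)]
  simp only [Fin.val_zero, zero_add, pow_one, neg_smul, one_smul]
  abel

lemma cochainD_one_apply (f : (Fin 1 → K) → M) (s : Fin 2 → K) :
    cochainD τ 1 f s =
      τ (s 0) (f (fun _ => s 1)) - f (fun _ => s 0 * s 1) + f (fun _ => s 0) := by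
  rw [cochainD_apply, Fin.sum_univ_two]
  have t1 : (fun i : Fin 0 => s i.succ.castSucc) = (fun i : Fin 0 => i.elim0) := funext fun i => i.elim0
  have e1 : f (fun i => s i.succ) = f (fun _ => s 1) := by
    rw [tuple1_eq f (fun i => s i.succ)]
    rfl
  have e2 : f (Fin.contractNth 0 (· * ·) s) = f (fun _ => s 0 * s 1) := by
    rw [tuple1_eq f (Fin.contractNth 0 (· * ·) s)]
    exact congrArg f (funext fun _ => by
      rw [Fin.contractNth_apply_of_eq _ _ _ _ rfl]; rfl)
  have e3 : f (Fin.contractNth 1 (· * ·) s) = f (fun _ => s 0) := by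
    rw [tuple1_eq f (Fin.contractNth 1 (· * ·) s)]
    exact congrArg f (funext fun _ => by
      rw [Fin.contractNth_apply_of_lt _ _ _ _ (by norm_num)]; rfl)
  rw [e1, e2, e3]
  norm_num
  abel

end LowDegree

section Surj

variable {G : Type} [Group G] {A : Type} [AddCommGroup A]
variable (σ : G →* AddAut A) (N : Subgroup G) [N.Normal]

lemma piBN_surj (hv1 : Vanish (σ.comp N.subtype) 0) (b : fixedSub (tauB σ) N) :
    ∃ c : fixedSub (tauC G A) N, piBN σ N c = b := by
  set bb : G → A := ((b : Bsub G A) : G → A) with hbb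
  have hfix : ∀ n ∈ N, ∀ x : G, bb (x * n) - σ x (bb n) = bb x := by
    intro n hn x
    have h1 : tauB σ n ↑b = ↑b := b.2 n hn
    have h2 : ((tauB σ n ↑b : Bsub G A) : G → A) = bb := congrArg Subtype.val h1
    have h3 : ((tauB σ n ↑b : Bsub G A) : G → A) x = bb (x * n) - σ x (bb (1 * n)) := rfl
    rw [one_mul] at h3
    rw [← congrFun h2 x, h3]
  -- the 1-cochain of `N` determined by `b`
  set u : (Fin 1 → ↥N) → A := fun s => bb ↑(s 0) with hu
  have hcoc : cochainD (σ.comp N.subtype) 1 u = 0 := by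
    funext s
    rw [cochainD_one_apply]
    show σ ↑(s 0) (bb ↑(s 1)) - bb ↑(s 0 * s 1) + bb ↑(s 0) = 0
    have := hfix ↑(s 1) (s 1).2 ↑(s 0)
    show σ ↑(s 0) (bb ↑(s 1)) - bb (↑(s 0) * ↑(s 1)) + bb ↑(s 0) = 0
    rw [← this]
    abel
  obtain ⟨e, he⟩ := hv1 u hcoc
  set a : A := e (fun i => i.elim0) with ha
  have hcob : ∀ n : N, bb ↑n = σ ↑n a - a := by
    intro n
    have h1 := congrFun he (fun _ => n)
    rw [cochainD_zero_apply] at h1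
    exact h1.symm
  -- the lift
  set c : G → A := bb - iota σ a with hc
  have hmem : c ∈ fixedSub (tauC G A) N := by
    intro n hn
    funext x
    show c (x * n) = c x
    have h1 : bb (x * n) = bb x + σ x (bb ↑(⟨n, hn⟩ : N)) := by
      have := hfix n hn x
      rw [← this]; abel
    show bb (x * n) - σ (x * n) a = bb x - σ x a
    rw [h1, hcob ⟨n, hn⟩, map_sub, map_mul]
    show bb x + (σ x (σ n a) - σ x a) - σ x (σ n a) = bb x - σ x a
    abel
  refine ⟨⟨c, hmem⟩, ?_⟩
  apply Subtype.ext
  show piB σ c = ↑b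
  rw [hc, map_sub, piB_iota, sub_zero, hbb, piB_val]

lemma vanishBN (j : ℕ) (hA : Vanish (σ.comp N.subtype) (j + 1)) (hC : Vanish ((tauC G A).comp N.subtype) j) :
    Vanish ((tauB σ).comp N.subtype) j := by
  intro b hb
  set c : (Fin (j + 1) → ↥N) → (G → A) := fun x => ((b x : Bsub G A) : G → A) with hcdef
  have hpc : (fun x => piB σ (c x)) = b := by
    funext x
    exact piB_val σ (b x)
  have hpiBd : (fun x => piB σ (cochainD ((tauC G A).comp N.subtype) (j + 1) c x)) = 0 := by
    rw [← cochainD_push ((tauC G A).comp N.subtype) ((tauB σ).comp N.subtype) (piB σ)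
      (fun k f => piB_equiv σ ↑k f) (j + 1) c]
    rw [hpc, hb]
  set aa : (Fin (j + 2) → ↥N) → A :=
    fun x => (cochainD ((tauC G A).comp N.subtype) (j + 1) c x) 1 with haa
  have hdc : cochainD ((tauC G A).comp N.subtype) (j + 1) c = fun x => iota σ (aa x) := by
    funext x
    exact ker_piB σ (congrFun hpiBd x)
  have hdda : (fun x => iota σ (cochainD (σ.comp N.subtype) (j + 2) aa x)) = 0 := by
    rw [← cochainD_push (σ.comp N.subtype) ((tauC G A).comp N.subtype) (iota σ)
      (fun k a => iota_equiv σ ↑k a) (j + 2) aa]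
    rw [← hdc, dd]
  have hacoc : cochainD (σ.comp N.subtype) (j + 2) aa = 0 := by
    funext x
    exact iota_inj σ ((congrFun hdda x).trans (map_zero (iota σ)).symm)
  obtain ⟨a', ha'⟩ := hA aa hacoc
  have hc' : cochainD ((tauC G A).comp N.subtype) (j + 1) (c - fun x => iota σ (a' x)) = 0 := by
    rw [map_sub, hdc]
    rw [cochainD_push (σ.comp N.subtype) ((tauC G A).comp N.subtype) (iota σ)
      (fun k a => iota_equiv σ ↑k a) (j + 1) a', ha']
    funext x
    simp
  obtain ⟨E, hE⟩ := hC _ hc'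
  refine ⟨fun x => piB σ (E x), ?_⟩
  rw [cochainD_push ((tauC G A).comp N.subtype) ((tauB σ).comp N.subtype) (piB σ)
      (fun k f => piB_equiv σ ↑k f) j E, hE]
  funext x
  show piB σ (c x - iota σ (a' x)) = b x
  rw [map_sub, piB_iota, sub_zero, hcdef]
  exact piB_val σ (b x)

end Surj

end InfResAux
namespace InfResAux
open TateAux

section Base

variable {G : Type} [Group G] {A : Type} [AddCommGroup A]
variable (σ : G →* AddAut A) (N : Subgroup G) [hN : N.Normal]

lemma base5 :
    ∀ f, cochainD (quotAut σ N) 1 f = 0 →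
      (∃ e, cochainD σ 0 e = inflMap σ N 1 f) →
      ∃ e', cochainD (quotAut σ N) 0 e' = f := by
  rintro f hf ⟨e, he⟩
  set a : A := e (fun i => i.elim0) with ha
  have key : ∀ x : Fin 1 → G,
      ((f (fun i => QuotientGroup.mk (x i)) : fixedSub σ N) : A) = σ (x 0) a - a := by
    intro x
    have h1 := congrFun he x
    rw [cochainD_zero_apply] at h1
    exact h1.symm
  have amem : a ∈ fixedSub σ N := by
    intro n hn
    have h1 := key (fun _ => n)
    have h2 := key (fun _ => (1 : G))
    have hmk : (fun i : Fin 1 => (QuotientGroup.mk ((fun _ => n) i) : G ⧸ N)) =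
        (fun i : Fin 1 => (QuotientGroup.mk ((fun _ => (1 : G)) i) : G ⧸ N)) := by
      funext i
      show (QuotientGroup.mk n : G ⧸ N) = QuotientGroup.mk 1
      rw [QuotientGroup.eq]
      simpa using inv_mem hn
    rw [hmk] at h1
    rw [h1] at h2
    have h3 : σ (1 : G) a = a := by rw [map_one]; rfl
    rw [h3] at h2
    have h4 : σ n a - a = 0 := by rw [h2]; abel
    have := sub_eq_zero.mp h4
    exact this
  refine ⟨fun _ => ⟨a, amem⟩, ?_⟩
  funext x
  obtain ⟨g, hg⟩ : ∃ g : G, QuotientGroup.mk g = x 0 := ⟨(x 0).out, QuotientGroup.out_eq' _⟩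
  rw [cochainD_zero_apply]
  apply Subtype.ext
  rw [AddSubgroup.coe_sub]
  show ((quotAut σ N (x 0) ⟨a, amem⟩ : fixedSub σ N) : A) - a = ((f x : fixedSub σ N) : A)
  have h5 : f x = f (fun _ => x 0) := by
    apply tuple1_eq
  rw [h5, ← hg]
  have h6 : ((quotAut σ N (QuotientGroup.mk g) ⟨a, amem⟩ : fixedSub σ N) : A) = σ g a := rfl
  rw [h6]
  exact (key (fun _ => g)).symm

lemma base7 :
    ∀ f, cochainD σ 1 f = 0 →
      (∃ e, cochainD (σ.comp N.subtype) 0 e = resMap N 1 f) →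
      ∃ f', cochainD (quotAut σ N) 1 f' = 0 ∧
        ∃ e, cochainD σ 0 e = inflMap σ N 1 f' - f := by
  rintro f hf ⟨e, he⟩
  set a : A := e (fun i => i.elim0) with ha
  have hco : ∀ x y : G,
      σ x (f (fun _ => y)) - f (fun _ => x * y) + f (fun _ => x) = 0 := by
    intro x y
    have h1 := congrFun hf ![x, y]
    rw [cochainD_one_apply] at h1
    simpa using h1
  have hres : ∀ n : N, f (fun _ => (n : G)) = σ ↑n a - a := by
    intro n
    have h1 := congrFun he (fun _ => n)
    rw [cochainD_zero_apply] at h1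
    exact h1.symm
  set u : G → A := fun x => f (fun _ => x) - (σ x a - a) with hu
  have hfxy : ∀ x y : G, f (fun _ => x * y) = σ x (f fun _ => y) + f (fun _ => x) := by
    intro x y
    have h1 := hco x y
    have h2 : -(f (fun _ => x * y) - (σ x (f fun _ => y) + f (fun _ => x))) = 0 := by
      rw [← h1]; abel
    exact sub_eq_zero.mp (neg_eq_zero.mp h2)
  have hsmul : ∀ x y : G, σ (x * y) a = σ x (σ y a) := by
    intro x y; rw [map_mul]; rfl
  have huco : ∀ x y : G, u (x * y) = u x + σ x (u y) := by
    intro x y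
    show f (fun _ => x * y) - (σ (x * y) a - a) =
      (f (fun _ => x) - (σ x a - a)) + σ x (f (fun _ => y) - (σ y a - a))
    rw [hfxy, hsmul, map_sub, map_sub]
    abel
  have hu1 : ∀ n : N, u ↑n = 0 := by
    intro n
    show f (fun _ => (n : G)) - (σ ↑n a - a) = 0
    rw [hres n]
    exact sub_self _
  have hurt : ∀ g n, n ∈ N → u (g * n) = u g := by
    intro g n hn
    rw [huco, hu1 ⟨n, hn⟩, map_zero, add_zero]
  have hufix : ∀ g, ∀ n ∈ N, σ n (u g) = u g := by
    intro g n hn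
    have h1 : u (n * g) = u n + σ n (u g) := huco n g
    rw [hu1 ⟨n, hn⟩, zero_add] at h1
    have h2 : n * g = g * (g⁻¹ * n * g) := by group
    have h3 : g⁻¹ * n * g ∈ N := by
      have := hN.conj_mem n hn g⁻¹
      rwa [inv_inv] at this
    rw [← h1, h2, hurt g _ h3]
  set uq : G ⧸ N → A := fun q => u q.out with huq
  have huqmk : ∀ g : G, uq (QuotientGroup.mk g) = u g := by
    intro g
    have hmem : g⁻¹ * (QuotientGroup.mk g : G ⧸ N).out ∈ N :=
      QuotientGroup.eq.mp (QuotientGroup.out_eq' _).symm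
    have h1 : (QuotientGroup.mk g : G ⧸ N).out = g * (g⁻¹ * (QuotientGroup.mk g : G ⧸ N).out) :=
      (mul_inv_cancel_left g _).symm
    show u (QuotientGroup.mk g : G ⧸ N).out = u g
    rw [h1, hurt g _ hmem]
  have hmem' : ∀ q : G ⧸ N, uq q ∈ fixedSub σ N := by
    intro q
    induction q using QuotientGroup.induction_on with
    | H g =>
      intro n hn
      rw [huqmk]
      exact hufix g n hn
  refine ⟨fun x => ⟨uq (x 0), hmem' (x 0)⟩, ?_, ?_⟩
  · funext x
    rw [cochainD_one_apply]
    obtain ⟨g0, hg0⟩ : ∃ g : G, QuotientGroup.mk g = x 0 := ⟨(x 0).out, QuotientGroup.out_eq' _⟩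
    obtain ⟨g1, hg1⟩ : ∃ g : G, QuotientGroup.mk g = x 1 := ⟨(x 1).out, QuotientGroup.out_eq' _⟩
    apply Subtype.ext
    rw [AddSubgroup.coe_add, AddSubgroup.coe_sub]
    show ((quotAut σ N (x 0) ⟨uq (x 1), hmem' (x 1)⟩ : fixedSub σ N) : A) -
        uq (x 0 * x 1) + uq (x 0) = ((0 : fixedSub σ N) : A)
    rw [← hg0, ← hg1]
    have h6 : ((quotAut σ N (QuotientGroup.mk g0)
        ⟨uq (QuotientGroup.mk g1), hmem' (QuotientGroup.mk g1)⟩ :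
        fixedSub σ N) : A) = σ g0 (uq (QuotientGroup.mk g1)) := rfl
    rw [h6]
    have h7 : (QuotientGroup.mk g0 : G ⧸ N) * QuotientGroup.mk g1 = QuotientGroup.mk (g0 * g1) :=
      rfl
    rw [h7, huqmk, huqmk, huqmk, huco]
    show σ g0 (u g1) - (u g0 + σ g0 (u g1)) + u g0 = 0
    abel
  · refine ⟨fun _ => -a, ?_⟩
    funext x
    rw [cochainD_zero_apply]
    show σ (x 0) (-a) - (-a) = inflMap σ N 1 (fun y => ⟨uq (y 0), hmem' (y 0)⟩) x - f x
    have h8 : inflMap σ N 1 (fun y => ⟨uq (y 0), hmem' (y 0)⟩) x = u (x 0) := by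
      show uq (QuotientGroup.mk (x 0)) = u (x 0)
      exact huqmk (x 0)
    rw [h8, map_neg]
    have h9 : f x = f (fun _ => x 0) := tuple1_eq f x
    rw [h9, sub_neg_eq_add]
    have hu0 : u (x 0) = f (fun _ => x 0) - (σ (x 0) a - a) := rfl
    rw [hu0]
    abel

end Base

end InfResAux
namespace InfResAux
open TateAux

theorem master {G : Type} [Group G] (N : Subgroup G) [hN : N.Normal] (m : ℕ) :
    ∀ {A : Type} [AddCommGroup A] (σ : G →* AddAut A),
      (∀ j, j + 1 < m + 1 → Vanish (σ.comp N.subtype) j) →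
      ((∀ f, cochainD (quotAut σ N) (m + 1) f = 0 →
          (∃ e, cochainD σ m e = inflMap σ N (m + 1) f) →
          ∃ e', cochainD (quotAut σ N) m e' = f) ∧
        (∀ f, cochainD σ (m + 1) f = 0 →
          (∃ e, cochainD (σ.comp N.subtype) m e = resMap N (m + 1) f) →
          ∃ f', cochainD (quotAut σ N) (m + 1) f' = 0 ∧
            ∃ e, cochainD σ m e = inflMap σ N (m + 1) f' - f)) := by
  induction m with
  | zero =>
    intro A _ σ _
    exact ⟨base5 σ N, base7 σ N⟩
  | succ m ih =>
    intro A _ σ hv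
    have hv' : ∀ j, j + 1 < m + 1 → Vanish ((tauB σ).comp N.subtype) j := fun j hj =>
      vanishBN σ N j (hv (j + 1) (by omega)) (vanishC_N N j)
    have hB := ih (tauB σ) hv'
    have hv1 : Vanish (σ.comp N.subtype) 0 := hv 0 (by omega)
    have hiotaEquivN : ∀ (k : ↥N) (a : A),
        iota σ (σ.comp N.subtype k a) = (tauC G A).comp N.subtype k (iota σ a) :=
      fun k a => iota_equiv σ ↑k a
    have hpiBEquivN : ∀ (k : ↥N) (f : G → A),
        piB σ ((tauC G A).comp N.subtype k f) = (tauB σ).comp N.subtype k (piB σ f) :=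
      fun k f => piB_equiv σ ↑k f
    constructor
    · -- exactness at H^{m+2}(G/N, A^N): inflation injective
      rintro f hf ⟨e, he⟩
      -- 1. ιN ∘ f is a cocycle valued in C^N
      have h1 : cochainD (quotAut (tauC G A) N) (m + 1 + 1) (fun x => iotaN σ N (f x)) = 0 := by
        rw [cochainD_push (quotAut σ N) (quotAut (tauC G A) N) (iotaN σ N)
          (fun q a => iotaN_equiv σ N q a) (m + 1 + 1) f, hf]
        funext x; simp
      -- 2. it is a coboundary since C^N is coinduced for G/N
      obtain ⟨Ebar, hEbar⟩ := vanishC_quot N (m + 1) _ h1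
      -- 3. inflate
      set Ec : (Fin (m + 1) → G) → (G → A) := inflMap (tauC G A) N (m + 1) Ebar with hEc
      have h3 : cochainD (tauC G A) (m + 1) Ec =
          fun x => iota σ (cochainD σ (m + 1) e x) := by
        rw [hEc, infl_d (tauC G A) N (m + 1) Ebar, hEbar]
        have h4 : inflMap (tauC G A) N (m + 1 + 1) (fun x => iotaN σ N (f x)) =
            fun x => iota σ (inflMap σ N (m + 1 + 1) f x) := rfl
        rw [h4, he]
      -- 4. Ec - ι∘e is a cocycle in the coinduced module, hence a coboundary
      have h5 : cochainD (tauC G A) (m + 1) (Ec - fun x => iota σ (e x)) = 0 := by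
        rw [map_sub, h3, cochainD_push σ (tauC G A) (iota σ) (fun g a => iota_equiv σ g a)
          (m + 1) e]
        simp
      obtain ⟨W, hW⟩ := vanishC_G m _ h5
      -- 5. b̄ := piBN ∘ Ebar is a cocycle
      have h6 : cochainD (quotAut (tauB σ) N) (m + 1) (fun x => piBN σ N (Ebar x)) = 0 := by
        rw [cochainD_push (quotAut (tauC G A) N) (quotAut (tauB σ) N) (piBN σ N)
          (fun q c => piBN_equiv σ N q c) (m + 1) Ebar, hEbar]
        funext x
        exact piBN_iotaN σ N (f x)
      -- 6. its inflation is the coboundary of πB∘W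
      have h8 : cochainD (tauB σ) m (fun x => piB σ (W x)) =
          inflMap (tauB σ) N (m + 1) (fun x => piBN σ N (Ebar x)) := by
        rw [cochainD_push (tauC G A) (tauB σ) (piB σ) (fun g c => piB_equiv σ g c) m W, hW]
        have h7 : inflMap (tauB σ) N (m + 1) (fun x => piBN σ N (Ebar x)) =
            fun x => piB σ (Ec x) := rfl
        rw [h7]
        funext x
        show piB σ (Ec x - iota σ (e x)) = piB σ (Ec x)
        rw [map_sub, piB_iota, sub_zero]
      -- 7. apply the inductive hypothesis (part 5) to Bsub
      obtain ⟨ebar, hebar⟩ := hB.1 (fun x => piBN σ N (Ebar x)) h6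
        ⟨fun x => piB σ (W x), h8⟩
      -- 8. lift ebar through piBN
      have hsur := piBN_surj σ N hv1
      choose E2 hE2 using fun x => hsur (ebar x)
      -- 9. Ebar - d E2 has values in ker piBN = im iotaN
      have h9 : ∀ x, piBN σ N ((Ebar - cochainD (quotAut (tauC G A) N) m E2) x) = 0 := by
        intro x
        have h10 : (fun x => piBN σ N (E2 x)) = ebar := funext hE2
        have h11 := cochainD_push (quotAut (tauC G A) N) (quotAut (tauB σ) N) (piBN σ N)
          (fun q c => piBN_equiv σ N q c) m E2
        rw [h10, hebar] at h11
        show piBN σ N (Ebar x - cochainD (quotAut (tauC G A) N) m E2 x) = 0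
        rw [map_sub, ← congrFun h11 x]
        simp
      choose v hvv using fun x => ker_piBN σ N _ (h9 x)
      refine ⟨v, ?_⟩
      -- 10. d v = f
      have h12 : (fun x => iotaN σ N (v x)) =
          Ebar - cochainD (quotAut (tauC G A) N) m E2 := funext hvv
      have h13 : cochainD (quotAut (tauC G A) N) (m + 1) (fun x => iotaN σ N (v x)) =
          fun x => iotaN σ N (f x) := by
        rw [h12, map_sub, hEbar, dd, sub_zero]
      rw [cochainD_push (quotAut σ N) (quotAut (tauC G A) N) (iotaN σ N)
        (fun q a => iotaN_equiv σ N q a) (m + 1) v] at h13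
      funext x
      exact iotaN_inj σ N (congrFun h13 x)
    · -- exactness at H^{m+2}(G, A)
      rintro f hf ⟨e, he⟩
      -- 1-2. embed and integrate once
      have h1 : cochainD (tauC G A) (m + 1 + 1) (fun x => iota σ (f x)) = 0 := by
        rw [cochainD_push σ (tauC G A) (iota σ) (fun g a => iota_equiv σ g a) (m + 1 + 1) f, hf]
        funext x; simp
      obtain ⟨F, hF⟩ := vanishC_G (m + 1) _ h1
      -- 3-4. restriction of F minus ι∘e is an N-cocycle in the coinduced module
      have h3 : cochainD ((tauC G A).comp N.subtype) (m + 1)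
          ((resMap N (m + 1) F) - fun x => iota σ (e x)) = 0 := by
        rw [map_sub, res_d (tauC G A) N (m + 1) F, hF,
          cochainD_push (σ.comp N.subtype) ((tauC G A).comp N.subtype) (iota σ)
            hiotaEquivN (m + 1) e, he]
        have h4 : resMap N (m + 1 + 1) (fun x => iota σ (f x)) =
            fun s => iota σ (resMap N (m + 1 + 1) f s) := rfl
        rw [h4]
        funext x; simp
      obtain ⟨E, hE⟩ := vanishC_N N m _ h3
      -- 5. F̃ := πB ∘ F is a cocycle in Bsub
      have h5 : cochainD (tauB σ) (m + 1) (fun x => piB σ (F x)) = 0 := by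
        rw [cochainD_push (tauC G A) (tauB σ) (piB σ) (fun g c => piB_equiv σ g c) (m + 1) F,
          hF]
        funext x
        exact piB_iota σ (f x)
      -- 6. its restriction is the coboundary of πB∘E
      have h6 : cochainD ((tauB σ).comp N.subtype) m (fun x => piB σ (E x)) =
          resMap N (m + 1) (fun x => piB σ (F x)) := by
        rw [cochainD_push ((tauC G A).comp N.subtype) ((tauB σ).comp N.subtype) (piB σ)
          hpiBEquivN m E, hE]
        funext x
        show piB σ (resMap N (m + 1) F x - iota σ (e x)) = _
        rw [map_sub, piB_iota, sub_zero]
        rfl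
      -- 7. inductive hypothesis, part 7, for Bsub
      obtain ⟨b', hb'coc, Et, hEt⟩ := hB.2 (fun x => piB σ (F x)) h5
        ⟨fun x => piB σ (E x), h6⟩
      -- 8. lift b' through piBN
      have hsur := piBN_surj σ N hv1
      choose F' hF' using fun x => hsur (b' x)
      -- 9-10. d F' has values in im iotaN
      have h9 : ∀ x, piBN σ N (cochainD (quotAut (tauC G A) N) (m + 1) F' x) = 0 := by
        intro x
        have h10 : (fun x => piBN σ N (F' x)) = b' := funext hF'
        have h11 := cochainD_push (quotAut (tauC G A) N) (quotAut (tauB σ) N) (piBN σ N)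
          (fun q c => piBN_equiv σ N q c) (m + 1) F'
        rw [h10, hb'coc] at h11
        exact (congrFun h11 x).symm.trans rfl
      choose f'' hf'' using fun x => ker_piBN σ N _ (h9 x)
      have h12 : (fun x => iotaN σ N (f'' x)) =
          cochainD (quotAut (tauC G A) N) (m + 1) F' := funext hf''
      -- 11. f'' is a cocycle
      have h13 : cochainD (quotAut σ N) (m + 1 + 1) f'' = 0 := by
        have h14 : cochainD (quotAut (tauC G A) N) (m + 1 + 1)
            (fun x => iotaN σ N (f'' x)) = 0 := by
          rw [h12, dd]
        rw [cochainD_push (quotAut σ N) (quotAut (tauC G A) N) (iotaN σ N)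
          (fun q a => iotaN_equiv σ N q a) (m + 1 + 1) f''] at h14
        funext x
        exact iotaN_inj σ N ((congrFun h14 x).trans (map_zero (iotaN σ N)).symm)
      -- 12. produce the coboundary witness
      set F'' : (Fin (m + 1) → G) → (G → A) := inflMap (tauC G A) N (m + 1) F' with hF''
      have h15 : cochainD (tauC G A) (m + 1) F'' =
          fun x => iota σ (inflMap σ N (m + 1 + 1) f'' x) := by
        rw [hF'', infl_d (tauC G A) N (m + 1) F', ← h12]
        rfl
      set u : (Fin (m + 1) → G) → (G → A) := F'' - F with hu
      have h16 : (fun x => piB σ (u x)) = fun x =>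
          inflMap (tauB σ) N (m + 1) b' x - piB σ (F x) := by
        funext x
        show piB σ (F'' x - F x) = _
        rw [map_sub]
        congr 1
        show piB σ ((F' (fun i => QuotientGroup.mk (x i)) : fixedSub (tauC G A) N) : G → A) = _
        have := hF' (fun i => QuotientGroup.mk (x i))
        calc piB σ ((F' (fun i => QuotientGroup.mk (x i)) : fixedSub (tauC G A) N) : G → A)
            = ((piBN σ N (F' (fun i => QuotientGroup.mk (x i))) :
                fixedSub (tauB σ) N) : Bsub G A) := rfl
          _ = ((b' (fun i => QuotientGroup.mk (x i)) : fixedSub (tauB σ) N) : Bsub G A) := by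
              rw [this]
          _ = inflMap (tauB σ) N (m + 1) b' x := rfl
      set E2 : (Fin m → G) → (G → A) := fun x => ((Et x : Bsub G A) : G → A) with hE2'
      have h17 : (fun x => piB σ (cochainD (tauC G A) m E2 x)) = fun x => piB σ (u x) := by
        rw [← cochainD_push (tauC G A) (tauB σ) (piB σ) (fun g c => piB_equiv σ g c) m E2]
        have h18 : (fun x => piB σ (E2 x)) = Et := by
          funext x
          exact piB_val σ (Et x)
        rw [h18, hEt, h16]
        rfl
      have h19 : ∀ x, piB σ ((u - cochainD (tauC G A) m E2) x) = 0 := by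
        intro x
        show piB σ (u x - cochainD (tauC G A) m E2 x) = 0
        rw [map_sub, ← congrFun h17 x]
        simp
      set v : (Fin (m + 1) → G) → A := fun x => ((u - cochainD (tauC G A) m E2) x) 1 with hv2
      have h20 : (fun x => iota σ (v x)) = u - cochainD (tauC G A) m E2 := by
        funext x
        exact (ker_piB σ (h19 x)).symm
      have h21 : cochainD (tauC G A) (m + 1) (fun x => iota σ (v x)) =
          fun x => iota σ ((inflMap σ N (m + 1 + 1) f'' - f) x) := by
        rw [h20, map_sub, dd, sub_zero, hu, map_sub, h15, hF]
        funext x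
        show iota σ (inflMap σ N (m + 1 + 1) f'' x) - iota σ (f x) = _
        rw [← map_sub]
        rfl
      refine ⟨f'', h13, v, ?_⟩
      rw [cochainD_push σ (tauC G A) (iota σ) (fun g a => iota_equiv σ g a) (m + 1) v] at h21
      funext x
      exact iota_inj σ (congrFun h21 x)

end InfResAux
namespace InfResAux
open TateAux

lemma vanish_of_subsingleton {K : Type} [Group K] {M : Type} [AddCommGroup M]
    (τ : K →* AddAut M) (j : ℕ)
    (h : Subsingleton ((AddMonoidHom.ker (cochainD τ (j + 1))) ⧸
      ((AddMonoidHom.range (cochainD τ j)).addSubgroupOf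
        (AddMonoidHom.ker (cochainD τ (j + 1)))))) :
    Vanish τ j := by
  intro f hf
  set x : AddMonoidHom.ker (cochainD τ (j + 1)) := ⟨f, AddMonoidHom.mem_ker.mpr hf⟩ with hx
  have h1 : (QuotientAddGroup.mk x : (AddMonoidHom.ker (cochainD τ (j + 1))) ⧸
      ((AddMonoidHom.range (cochainD τ j)).addSubgroupOf
        (AddMonoidHom.ker (cochainD τ (j + 1))))) = QuotientAddGroup.mk 0 :=
    Subsingleton.elim _ _
  have h2 := (QuotientAddGroup.eq).mp h1
  rw [add_zero] at h2
  have h3 : ((-x : AddMonoidHom.ker (cochainD τ (j + 1))) : (Fin (j + 1) → K) → M) ∈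
      AddMonoidHom.range (cochainD τ j) := (AddSubgroup.mem_addSubgroupOf).mp h2
  obtain ⟨e, he⟩ := h3
  refine ⟨-e, ?_⟩
  rw [map_neg, he]
  show - (-f) = f
  rw [neg_neg]

lemma sum_signs (k : ℕ) :
    (∑ j : Fin k, (-1 : ℤ) ^ ((j : ℕ) + 1)) = if Even k then 0 else -1 := by
  induction k with
  | zero => simp
  | succ k ihk =>
    rw [Fin.sum_univ_castSucc]
    simp only [Fin.coe_castSucc, Fin.val_last, ihk]
    rcases Nat.even_or_odd k with hk | hk
    · have hne : ¬ Even (k + 1) := by simpa [Nat.even_add_one] using hk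
      rw [if_pos hk, if_neg hne, zero_add, pow_succ, hk.neg_one_pow, one_mul]
    · have h0 : ¬ Even k := Nat.not_even_iff_odd.mpr hk
      have h1 : Even (k + 1) := by simpa [Nat.even_add_one] using h0
      rw [if_neg h0, if_pos h1, Even.neg_one_pow h1]
      norm_num

lemma contractNth_const_one {K : Type} [Group K] (k : ℕ) (j : Fin (k + 1)) :
    Fin.contractNth j (· * ·) (fun _ : Fin (k + 1) => (1 : K)) = fun _ => 1 := by
  funext i
  rcases lt_trichotomy (i : ℕ) (j : ℕ) with h | h | h
  · rw [Fin.contractNth_apply_of_lt _ _ _ _ h]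
  · rw [Fin.contractNth_apply_of_eq _ _ _ _ h, one_mul]
  · rw [Fin.contractNth_apply_of_gt _ _ _ _ h]

end InfResAux
namespace InfResAux
open TateAux

lemma part6 {G : Type} [Group G] {A : Type} [AddCommGroup A]
    (σ : G →* AddAut A) (N : Subgroup G) [N.Normal] (m : ℕ) :
    ∀ f, cochainD (quotAut σ N) (m + 1) f = 0 →
      ∃ e, cochainD (σ.comp N.subtype) m e = resMap N (m + 1) (inflMap σ N (m + 1) f) := by
  intro f hf
  set c : fixedSub σ N := f (fun _ => (1 : G ⧸ N)) with hc
  have hconst : resMap N (m + 1) (inflMap σ N (m + 1) f) = fun _ => (c : A) := by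
    funext s
    show ((f (fun i => QuotientGroup.mk ((s i : G))) : fixedSub σ N) : A) = (c : A)
    congr 2
    funext i
    exact (QuotientGroup.eq_one_iff _).mpr (s i).2
  rw [hconst]
  have hexp : quotAut σ N 1 c +
      (∑ j : Fin (m + 1 + 1), (-1 : ℤ) ^ ((j : ℕ) + 1)) • c = 0 := by
    have h1 := congrFun hf (fun _ => (1 : G ⧸ N))
    rw [cochainD_apply] at h1
    have h2 : ∀ j : Fin (m + 1 + 1),
        ((-1 : ℤ) ^ ((j : ℕ) + 1)) •
            f (Fin.contractNth j (· * ·) (fun _ => (1 : G ⧸ N))) =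
          ((-1 : ℤ) ^ ((j : ℕ) + 1)) • c := by
      intro j
      rw [contractNth_const_one]
    rw [Finset.sum_congr rfl (fun j _ => h2 j), ← Finset.sum_smul] at h1
    exact h1
  rcases Nat.even_or_odd m with hm | hm
  · have hS : (∑ j : Fin (m + 1 + 1), (-1 : ℤ) ^ ((j : ℕ) + 1)) = 0 := by
      rw [sum_signs, if_pos]
      obtain ⟨t, ht⟩ := hm
      exact ⟨t + 1, by omega⟩
    rw [hS, zero_smul, add_zero] at hexp
    have h5 : quotAut σ N 1 c = c := by rw [map_one]; rfl
    rw [h5] at hexp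
    refine ⟨0, ?_⟩
    rw [map_zero]
    funext s
    show (0 : A) = (c : A)
    rw [hexp]
    simp
  · refine ⟨fun _ => (c : A), ?_⟩
    funext s
    rw [cochainD_apply]
    have h5 : (σ.comp N.subtype) (s 0) (c : A) = (c : A) := c.2 ↑(s 0) (s 0).2
    have hS : (∑ j : Fin (m + 1), (-1 : ℤ) ^ ((j : ℕ) + 1)) = 0 := by
      rw [sum_signs, if_pos]
      obtain ⟨t, ht⟩ := hm
      exact ⟨t + 1, by omega⟩
    show (σ.comp N.subtype) (s 0) (c : A) +
        (∑ j : Fin (m + 1), ((-1 : ℤ) ^ ((j : ℕ) + 1)) • (c : A)) = (c : A)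
    rw [h5, ← Finset.sum_smul, hS, zero_smul, add_zero]

end InfResAux

/-- **The inflation-restriction exact sequence in degree `n = m+1`.**
Let `G` be a finite group, `A` a `G`-module and `N ⊴ G` a normal subgroup with
`H^i(N, A) = 0` for `i = 1, …, n-1`.  Then the sequence
`0 → H^n(G/N, A^N) → H^n(G, A) → H^n(N, A)`, with maps induced by inflation
and restriction, is exact.  This is expressed at the level of inhomogeneous
cochains: inflation and restriction preserve cocycles and coboundaries,
inflation is injective on cohomology, the composite of restriction and
inflation vanishes on cohomology, and every class killed by restriction is an
inflated class. -/
theorem inflation_restriction_exact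
    (G : Type) [Group G] [Fintype G]
    (A : Type) [AddCommGroup A] (σ : G →* AddAut A)
    (N : Subgroup G) [N.Normal] (m : ℕ)
    (hvanish : ∀ j : ℕ, j + 1 < m + 1 →
      Subsingleton ((AddMonoidHom.ker (TateAux.cochainD (σ.comp N.subtype) (j + 1))) ⧸
        ((AddMonoidHom.range (TateAux.cochainD (σ.comp N.subtype) j)).addSubgroupOf
          (AddMonoidHom.ker (TateAux.cochainD (σ.comp N.subtype) (j + 1)))))) :
    -- inflation sends cocycles to cocycles and coboundaries to coboundaries
    (∀ f, TateAux.cochainD (quotAut σ N) (m + 1) f = 0 →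
        TateAux.cochainD σ (m + 1) (inflMap σ N (m + 1) f) = 0) ∧
    (∀ f e, TateAux.cochainD (quotAut σ N) m e = f →
        ∃ e', TateAux.cochainD σ m e' = inflMap σ N (m + 1) f) ∧
    -- restriction sends cocycles to cocycles and coboundaries to coboundaries
    (∀ f, TateAux.cochainD σ (m + 1) f = 0 →
        TateAux.cochainD (σ.comp N.subtype) (m + 1) (resMap N (m + 1) f) = 0) ∧
    (∀ f e, TateAux.cochainD σ m e = f →
        ∃ e', TateAux.cochainD (σ.comp N.subtype) m e' = resMap N (m + 1) f) ∧
    -- exactness at `H^n(G/N, A^N)`: inflation is injective on cohomology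
    (∀ f, TateAux.cochainD (quotAut σ N) (m + 1) f = 0 →
      (∃ e, TateAux.cochainD σ m e = inflMap σ N (m + 1) f) →
      ∃ e, TateAux.cochainD (quotAut σ N) m e = f) ∧
    -- exactness at `H^n(G, A)`: image of inflation ⊆ kernel of restriction …
    (∀ f, TateAux.cochainD (quotAut σ N) (m + 1) f = 0 →
      ∃ e, TateAux.cochainD (σ.comp N.subtype) m e = resMap N (m + 1) (inflMap σ N (m + 1) f)) ∧
    -- … and kernel of restriction ⊆ image of inflation
    (∀ f, TateAux.cochainD σ (m + 1) f = 0 →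
      (∃ e, TateAux.cochainD (σ.comp N.subtype) m e = resMap N (m + 1) f) →
      ∃ f', TateAux.cochainD (quotAut σ N) (m + 1) f' = 0 ∧
        ∃ e, TateAux.cochainD σ m e = inflMap σ N (m + 1) f' - f) := by
  have hvan : ∀ j, j + 1 < m + 1 → InfResAux.Vanish (σ.comp N.subtype) j := fun j hj =>
    InfResAux.vanish_of_subsingleton _ j (hvanish j hj)
  obtain ⟨h5, h7⟩ := InfResAux.master N m σ hvan
  refine ⟨?_, ?_, ?_, ?_, h5, InfResAux.part6 σ N m, h7⟩
  · intro f hf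
    rw [InfResAux.infl_d σ N (m + 1) f, hf]
    funext x
    show ((0 : fixedSub σ N) : A) = 0
    simp
  · intro f e hde
    exact ⟨inflMap σ N m e, by rw [InfResAux.infl_d σ N m e, hde]⟩
  · intro f hf
    rw [InfResAux.res_d σ N (m + 1) f, hf]
    rfl
  · intro f e hde
    exact ⟨resMap N m e, by rw [InfResAux.res_d σ N m e, hde]⟩
end

section
/- Let k be a field of characteristic p, G a cyclic group of order p, and V a finite-dimensional kG-module. If Hom_k(V,V), with the G-action (g·f)(v) = g·f(g^{-1}·v), is a free kG-module, then V is a free kG-module. -/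
open Module LinearMap

noncomputable section Aux

variable {k G : Type u} [Field k] [Group G] {V : Type v} [AddCommGroup V] [Module k V]
variable (ρ : Representation k G V)

instance aux_tower : IsScalarTower k (MonoidAlgebra k G) ρ.asModule :=
  ⟨fun r x m => by
    show ρ.asAlgebraHom (r • x) m = r • ρ.asAlgebraHom x m
    rw [map_smul]; rfl⟩

/-- The group algebra of a group of exponent dividing `p` over a field of characteristic `p`
is a local ring. -/
theorem aux_local (p : ℕ) [Fact p.Prime] [CharP k p] (G' : Type u) [CommGroup G'] [Fintype G']
    (hG : ∀ g : G', g ^ p = 1) : IsLocalRing (MonoidAlgebra k G') := by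
  classical
  haveI : CharP (MonoidAlgebra k G') p := charP_of_injective_algebraMap' k p
  have hp : p ≠ 0 := (Fact.out : p.Prime).ne_zero
  set ε := (MonoidAlgebra.lift k k G') 1 with hε
  have hx : ∀ x : MonoidAlgebra k G', x = ∑ g : G', MonoidAlgebra.single g (x.coeff g) := by
    intro x
    have h0 := (MonoidAlgebra.sum_coeff_single x).symm
    rwa [Finsupp.sum_fintype _ _ (fun g => by simp)] at h0
  have hεsum : ∀ x : MonoidAlgebra k G', ε x = ∑ g : G', x.coeff g := by
    intro x
    conv_lhs => rw [hx x]
    rw [map_sum]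
    simp [hε, MonoidAlgebra.lift_single]
  have hnil : ∀ a : MonoidAlgebra k G', ε a = 0 → a ^ p = 0 := by
    intro a ha
    conv_lhs => rw [hx a]
    rw [sum_pow_char]
    have : ∀ g : G', (MonoidAlgebra.single g (a.coeff g) : MonoidAlgebra k G') ^ p = MonoidAlgebra.single (1 : G') ((a.coeff g) ^ p) := by
      intro g
      rw [MonoidAlgebra.single_pow, hG]
    rw [Finset.sum_congr rfl fun g _ => this g]
    rw [show (∑ g : G', MonoidAlgebra.single (1:G') ((a.coeff g)^p))
        = MonoidAlgebra.single (1:G') (∑ g : G', (a.coeff g)^p) from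
      (map_sum (MonoidAlgebra.singleAddHom (1:G')) _ _).symm]
    rw [← sum_pow_char p Finset.univ (fun g : G' => a.coeff g)]
    rw [hεsum] at ha
    rw [ha, zero_pow hp]
    simp
  have hunit : ∀ a : MonoidAlgebra k G', ε a ≠ 0 → IsUnit a := by
    intro a ha
    have h1 : IsNilpotent (a - algebraMap k (MonoidAlgebra k G') (ε a)) :=
      ⟨p, hnil _ (by rw [map_sub, AlgHom.commutes, Algebra.algebraMap_self, RingHom.id_apply,
        sub_self])⟩
    have h2 : IsUnit (algebraMap k (MonoidAlgebra k G') (ε a)) :=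
      (isUnit_iff_ne_zero.2 ha).map (algebraMap k (MonoidAlgebra k G'))
    have := h1.isUnit_add_left_of_commute h2 (Commute.all _ _)
    rwa [add_sub_cancel] at this
  haveI : Nontrivial (MonoidAlgebra k G') := inferInstance
  apply IsLocalRing.of_isUnit_or_isUnit_one_sub_self
  intro a
  by_cases hεa : ε a = 0
  · right
    exact hunit _ (by rw [map_sub, map_one, hεa, sub_zero]; exact one_ne_zero)
  · left
    exact hunit a hεa

/-- Higman's criterion: if the identity is a relative trace, the module is projective. -/
theorem aux_projective [Fintype G] (f' : ρ.asModule →ₗ[k] ρ.asModule)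
    (hf : ∀ m : ρ.asModule, ∑ g : G,
      (MonoidAlgebra.single g⁻¹ (1 : k) : MonoidAlgebra k G) • f' ((MonoidAlgebra.single g (1 : k) : MonoidAlgebra k G) • m)
        = m) :
    Module.Projective (MonoidAlgebra k G) ρ.asModule := by
  classical
  set A := MonoidAlgebra k G
  set M := ρ.asModule
  let T : (M →₀ A) →ₗ[A] M := Finsupp.linearCombination A id
  have hT : Function.Surjective T := Finsupp.linearCombination_id_surjective A M
  obtain ⟨s₀, hs₀⟩ := (T.restrictScalars k).exists_rightInverse_of_surjective
    (LinearMap.range_eq_top.2 hT)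
  let S : M →ₗ[A] (M →₀ A) := (s₀ ∘ₗ f').sumOfConjugatesEquivariant G
  refine Module.Projective.of_split S T ?_
  ext m
  have hs₀' : ∀ x : M, T (s₀ x) = x := fun x => DFunLike.congr_fun hs₀ x
  rw [LinearMap.comp_apply, LinearMap.id_apply]
  rw [show S m = ∑ g : G, ((s₀ ∘ₗ f').conjugate g) m from
    (s₀ ∘ₗ f').sumOfConjugatesEquivariant_apply G m]
  rw [map_sum]
  have : ∀ g : G, T (((s₀ ∘ₗ f').conjugate g) m)
      = (MonoidAlgebra.single g⁻¹ (1 : k) : A) • f' ((MonoidAlgebra.single g (1 : k) : A) • m) := by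
    intro g
    rw [LinearMap.conjugate_apply, map_smul, LinearMap.comp_apply, hs₀']
  rw [Finset.sum_congr rfl fun g _ => this g]
  exact hf m

end Aux

/-- **Freeness of `Hom_k(V,V)` descends to `V`** (for `G` cyclic of order `p`).
Let `k` be a field of characteristic `p`, `G` a cyclic group of order `p`, and
`V` a finite-dimensional `kG`-module (given by a representation
`ρ : Representation k G V`).  If `Hom_k(V,V)`, with the conjugation `G`-action
`(g·f)(v) = g·f(g⁻¹·v)` (i.e. the representation `ρ.linHom ρ`), is a free
`kG`-module, then `V` is a free `kG`-module. -/
theorem free_of_linHom_free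
    (p : ℕ) [Fact p.Prime] (k : Type) [Field k] [CharP k p]
    (G : Type) [Group G] [Fintype G] (hcyc : IsCyclic G) (hcard : Nat.card G = p)
    (V : Type) [AddCommGroup V] [Module k V] [FiniteDimensional k V]
    (ρ : Representation k G V)
    (h : Module.Free (MonoidAlgebra k G) (ρ.linHom ρ).asModule) :
    Module.Free (MonoidAlgebra k G) ρ.asModule := by
  classical
  letI : CommGroup G := hcyc.commGroup
  set A := MonoidAlgebra k G with hA
  have hG : ∀ g : G, g ^ p = 1 := by
    intro g
    rw [← hcard, Nat.card_eq_fintype_card]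
    exact pow_card_eq_one
  haveI : IsLocalRing A := aux_local p G hG
  -- Extract the Higman element from projectivity of the inner-hom module.
  set π : Representation k G (V →ₗ[k] V) := ρ.linHom ρ with hπ
  set N := π.asModule
  haveI : Module.Projective A N := Module.Projective.of_free
  obtain ⟨s, hs⟩ := (Module.projective_def').1 (inferInstance : Module.Projective A N)
  set idN : N := (LinearMap.id : V →ₗ[k] V) with hidN
  set ξ : N →₀ A := s idN with hξ
  have hone : ∀ g : G, (MonoidAlgebra.single g (1 : k) : A) • idN = idN := by
    intro g
    show π.asAlgebraHom (MonoidAlgebra.single g 1) idN = idN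
    rw [Representation.asAlgebraHom_single_one]
    show ρ.linHom ρ g LinearMap.id = LinearMap.id
    rw [Representation.linHom_apply]
    ext v
    simp [← Module.End.mul_apply, ← map_mul]
  have hconst : ∀ (w : N) (g : G), (ξ w).coeff g = (ξ w).coeff 1 := by
    intro w g
    have h2 : (MonoidAlgebra.single g (1 : k) : A) • ξ = ξ := by
      rw [hξ, ← map_smul, hone]
    calc (ξ w).coeff g = (((MonoidAlgebra.single g (1 : k) : A) • ξ) w).coeff g := by rw [h2]
      _ = ((MonoidAlgebra.single g (1 : k) : A) * ξ w).coeff g := by rw [Finsupp.smul_apply]; rfl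
      _ = 1 * (ξ w).coeff (g⁻¹ * g) := MonoidAlgebra.coeff_single_mul_apply (ξ w) 1 g g
      _ = (ξ w).coeff 1 := by rw [one_mul, inv_mul_cancel]
  -- the candidate trace preimage
  set f : V →ₗ[k] V := ∑ w ∈ ξ.support, ((ξ w).coeff 1) • (π.asModuleEquiv w) with hf
  -- totality: `linearCombination ξ = idN`
  have htot : Finsupp.linearCombination A (id : N → N) ξ = idN := DFunLike.congr_fun hs idN
  have hexp : ∀ x : A, x = ∑ g : G, MonoidAlgebra.single g (x.coeff g) := by
    intro x
    have h0 := (MonoidAlgebra.sum_coeff_single x).symm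
    rwa [Finsupp.sum_fintype _ _ (fun g => by simp)] at h0
  -- pointwise evaluation of htot
  have hsmul_eval : ∀ (x : A) (w : N) (v : V),
      (π.asModuleEquiv (x • w)) v = ∑ g : G, x.coeff g • ρ g ((π.asModuleEquiv w) (ρ g⁻¹ v)) := by
    intro x w v
    conv_lhs => rw [hexp x]
    have : ((∑ g : G, MonoidAlgebra.single g (x.coeff g) : A) • w) = ∑ g : G, (MonoidAlgebra.single g (x.coeff g) : A) • w := by
      rw [Finset.sum_smul]
    rw [this]
    have : ∀ g : G, ((MonoidAlgebra.single g (x.coeff g) : A) • w) = x.coeff g • (π g (π.asModuleEquiv w)) := by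
      intro g
      show π.asAlgebraHom (MonoidAlgebra.single g (x.coeff g)) w = _
      rw [Representation.asAlgebraHom_single]
      rfl
    rw [show π.asModuleEquiv (∑ g : G, (MonoidAlgebra.single g (x.coeff g) : A) • w)
        = ∑ g : G, π.asModuleEquiv ((MonoidAlgebra.single g (x.coeff g) : A) • w) from map_sum _ _ _]
    rw [Finset.sum_congr rfl fun g _ => congrArg π.asModuleEquiv (this g)]
    rw [LinearMap.coe_sum, Finset.sum_apply]
    refine Finset.sum_congr rfl fun g _ => ?_
    show (x.coeff g • (π g (π.asModuleEquiv w))) v = x.coeff g • ρ g ((π.asModuleEquiv w) (ρ g⁻¹ v))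
    rw [LinearMap.smul_apply, hπ, Representation.linHom_apply]
    rfl
  have key : ∀ v : V, ∑ g : G, ρ g (f (ρ g⁻¹ v)) = v := by
    intro v
    have h1 : (π.asModuleEquiv (Finsupp.linearCombination A (_root_.id : N → N) ξ)) v = v := by
      rw [htot]; rfl
    rw [Finsupp.linearCombination_apply] at h1
    rw [Finsupp.sum] at h1
    simp only [id_eq] at h1
    rw [show π.asModuleEquiv (∑ w ∈ ξ.support, ξ w • (w : N))
        = ∑ w ∈ ξ.support, π.asModuleEquiv (ξ w • (w : N)) from map_sum _ _ _] at h1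
    rw [LinearMap.coe_sum, Finset.sum_apply] at h1
    rw [Finset.sum_congr rfl fun w _ => hsmul_eval (ξ w) w v] at h1
    rw [Finset.sum_comm] at h1
    refine Eq.trans ?_ h1
    refine Finset.sum_congr rfl fun g _ => ?_
    rw [hf, LinearMap.coe_sum, Finset.sum_apply, map_sum]
    refine Finset.sum_congr rfl fun w _ => ?_
    rw [LinearMap.smul_apply, map_smul, hconst w g]
  -- Higman's criterion
  haveI : Module.Projective A ρ.asModule := by
    refine aux_projective ρ (show ρ.asModule →ₗ[k] ρ.asModule from f) ?_
    intro m
    have hterm : ∀ g : G,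
        (MonoidAlgebra.single g⁻¹ (1 : k) : A) • (show ρ.asModule →ₗ[k] ρ.asModule from f)
          ((MonoidAlgebra.single g (1 : k) : A) • m)
        = ρ g⁻¹ (f (ρ g (ρ.asModuleEquiv m))) := by
      intro g
      show ρ.asAlgebraHom (MonoidAlgebra.single g⁻¹ 1) (f (ρ.asAlgebraHom (MonoidAlgebra.single g 1) m)) = _
      rw [Representation.asAlgebraHom_single_one, Representation.asAlgebraHom_single_one]
      rfl
    rw [Finset.sum_congr rfl fun g _ => hterm g]
    have := key (ρ.asModuleEquiv m)
    exact (show (∑ g : G, ρ g⁻¹ (f (ρ g (ρ.asModuleEquiv m))))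
        = ∑ g : G, ρ g (f (ρ g⁻¹ (ρ.asModuleEquiv m))) from
      Fintype.sum_equiv (Equiv.inv G) _ _ (fun g => by simp)).trans this
  haveI : Module.Finite k ρ.asModule := inferInstanceAs (Module.Finite k V)
  haveI : Module.Finite A ρ.asModule := Module.Finite.of_restrictScalars_finite k A ρ.asModule
  haveI : Module.FinitePresentation A ρ.asModule := Module.finitePresentation_of_projective A _
  exact Module.free_of_flat_of_isLocalRing
end
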